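/- arXiv:hep-th/0103109 — 4 statements merged into one kernel-verified Lean document; each statement's English description precedes it below -/
import Mathlib

section
/- For every real x with 0 < x < 1, the series Σ_{m=1}^∞ ((2m+1)!!·(2m-1)!! / (2m+2)!) · x^m converges and equals (1 - x/2 - √(1-x)) / x. -/
open Finset

private noncomputable def dd : ℕ → ℝ
  | 0 => 1
  | (k + 1) => -((catalan k : ℝ) / 2 ^ (2 * k + 1))

private lemma cb_le_four_pow (n : ℕ) : Nat.centralBinom n ≤ 4 ^ n := by
  calc Nat.centralBinom n = (2 * n).choose n := rfl
    _ ≤ ∑ i ∈ range (2 * n + 1), (2 * n).choose i :=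
        single_le_sum (fun i _ => Nat.zero_le _) (by simp; omega)
    _ = 2 ^ (2 * n) := Nat.sum_range_choose (2 * n)
    _ = 4 ^ n := by rw [pow_mul]; norm_num

private lemma catalan_le_four_pow (n : ℕ) : (catalan n : ℝ) ≤ 4 ^ n := by
  have h1 : catalan n ≤ Nat.centralBinom n := by
    rw [catalan_eq_centralBinom_div]
    exact Nat.div_le_self _ _
  have := le_trans h1 (cb_le_four_pow n)
  exact_mod_cast this

private lemma dd_abs_le (n : ℕ) : |dd n| ≤ 1 := by
  cases n with
  | zero => simp [dd]
  | succ k =>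
    have h0 : (0:ℝ) ≤ (catalan k : ℝ) := Nat.cast_nonneg _
    have h1 : (catalan k : ℝ) ≤ 4 ^ k := catalan_le_four_pow k
    have h2 : (0:ℝ) < 2 ^ (2 * k + 1) := by positivity
    have h4 : ((4:ℝ)) ^ k ≤ 2 ^ (2 * k + 1) := by
      have : ((4:ℝ)) ^ k = 2 ^ (2 * k) := by rw [pow_mul]; norm_num
      rw [this]
      exact pow_le_pow_right₀ (by norm_num) (by omega)
    simp only [dd, abs_neg, abs_div]
    rw [abs_of_nonneg h0, abs_of_pos h2, div_le_one h2]
    linarith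

/-- Convolution identity: the square of the `dd` series is `1 - x` coefficientwise. -/
private lemma dd_conv (n : ℕ) :
    ∑ kl ∈ Finset.HasAntidiagonal.antidiagonal n, dd kl.1 * dd kl.2 =
      if n = 0 then 1 else if n = 1 then -1 else 0 := by
  match n with
  | 0 => simp [dd]
  | 1 =>
    rw [Finset.Nat.sum_antidiagonal_eq_sum_range_succ_mk]
    norm_num [Finset.sum_range_succ, dd]
  | (k + 2) =>
    rw [Finset.Nat.sum_antidiagonal_eq_sum_range_succ_mk]
    simp only [Nat.add_eq, if_neg (by omega : ¬ k + 2 = 0), if_neg (by omega : ¬ k + 2 = 1)]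
    rw [Finset.sum_range_succ', Finset.sum_range_succ]
    have hmid : ∑ i ∈ range (k + 1), dd (i + 1) * dd (k + 2 - (i + 1)) =
        (catalan (k + 1) : ℝ) / 2 ^ (2 * k + 2) := by
      have hc : (catalan (k + 1) : ℝ) = ∑ i ∈ range (k + 1), (catalan i : ℝ) * catalan (k - i) := by
        have := catalan_succ' k
        rw [Finset.Nat.sum_antidiagonal_eq_sum_range_succ_mk] at this
        rw [this]
        push_cast
        rfl
      rw [hc, Finset.sum_div]
      refine Finset.sum_congr rfl fun i hi => ?_
      have hik : i ≤ k := by simpa using Nat.lt_succ_iff.mp (mem_range.mp hi)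
      have h1 : k + 2 - (i + 1) = (k - i) + 1 := by omega
      rw [h1]
      simp only [dd]
      rw [neg_mul_neg, div_mul_div_comm, ← pow_add]
      congr 2
      omega
    rw [hmid]
    have hdd0 : dd 0 = 1 := rfl
    have hdd2 : dd (k + 1 + 1) = -((catalan (k + 1) : ℝ) / 2 ^ (2 * (k + 1) + 1)) := rfl
    have e1 : k + 2 - (k + 1 + 1) = 0 := by omega
    have e2 : k + 2 - 0 = k + 1 + 1 := by omega
    have hpow : (2:ℝ) ^ (2 * (k + 1) + 1) = 2 * 2 ^ (2 * k + 2) := by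
      rw [show 2 * (k + 1) + 1 = (2 * k + 2) + 1 by ring, pow_succ]
      ring
    rw [e1, e2, hdd0, hdd2, hpow]
    have h2 : (2:ℝ) ^ (2 * k + 2) ≠ 0 := by positivity
    field_simp
    ring

/-- Closed form for partial sums of `catalan i / 2^(2i+1)`. -/
private lemma psum (N : ℕ) :
    ∑ i ∈ range N, (catalan i : ℝ) / 2 ^ (2 * i + 1) = 1 - (Nat.centralBinom N : ℝ) / 4 ^ N := by
  induction N with
  | zero => simp [Nat.centralBinom_zero]
  | succ n ih =>
    rw [Finset.sum_range_succ, ih]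
    have h1 : ((n : ℝ) + 1) * catalan n = Nat.centralBinom n := by
      exact_mod_cast congrArg (Nat.cast (R := ℝ)) (succ_mul_catalan_eq_centralBinom n)
    have h2 : ((n : ℝ) + 1) * Nat.centralBinom (n + 1) = 2 * (2 * n + 1) * Nat.centralBinom n := by
      exact_mod_cast congrArg (Nat.cast (R := ℝ)) (Nat.succ_mul_centralBinom_succ n)
    have hn1 : ((n : ℝ) + 1) ≠ 0 := by positivity
    have h2a : (2:ℝ) ^ (2 * n + 1) = 2 * 4 ^ n := by
      rw [pow_succ, pow_mul]
      ring_nf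
    have hA : ((4:ℝ)) ^ n ≠ 0 := by positivity
    have key : (catalan n : ℝ) / 2 ^ (2 * n + 1)
        = (Nat.centralBinom n : ℝ) / 4 ^ n - (Nat.centralBinom (n + 1) : ℝ) / 4 ^ (n + 1) := by
      apply mul_left_cancel₀ hn1
      rw [h2a, pow_succ, mul_sub, ← mul_div_assoc, ← mul_div_assoc, ← mul_div_assoc, h1, h2]
      rw [div_sub_div _ _ hA (by positivity), div_eq_div_iff (by positivity) (by positivity)]
      ring
    rw [key]
    ring

/-- The coefficient identity: double factorials to Catalan. -/
private lemma coef (m : ℕ) :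
    (Nat.doubleFactorial (2 * m + 3) : ℝ) * (Nat.doubleFactorial (2 * m + 1) : ℝ) /
      (Nat.factorial (2 * m + 4) : ℝ) = (catalan (m + 1) : ℝ) / 2 ^ (2 * m + 3) := by
  have hA : (Nat.factorial (2 * m + 4) : ℝ) =
      2 ^ (m + 2) * (Nat.factorial (m + 2)) * Nat.doubleFactorial (2 * m + 3) := by
    have h1 := Nat.factorial_eq_mul_doubleFactorial (2 * m + 3)
    have h2 := Nat.doubleFactorial_two_mul (m + 2)
    rw [show 2 * (m + 2) = 2 * m + 3 + 1 by ring] at h2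
    rw [show 2 * m + 4 = 2 * m + 3 + 1 by ring, h1, h2]
    push_cast
    ring
  have hB : (Nat.factorial (2 * m + 2) : ℝ) =
      2 ^ (m + 1) * (Nat.factorial (m + 1)) * Nat.doubleFactorial (2 * m + 1) := by
    have h1 := Nat.factorial_eq_mul_doubleFactorial (2 * m + 1)
    have h2 := Nat.doubleFactorial_two_mul (m + 1)
    rw [show 2 * (m + 1) = 2 * m + 1 + 1 by ring] at h2
    rw [show 2 * m + 2 = 2 * m + 1 + 1 by ring, h1, h2]
    push_cast
    ring
  have hC : ((m : ℝ) + 2) * catalan (m + 1) = Nat.centralBinom (m + 1) := by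
    exact_mod_cast congrArg (Nat.cast (R := ℝ)) (succ_mul_catalan_eq_centralBinom (m + 1))
  have hD : (Nat.centralBinom (m + 1) : ℝ) * Nat.factorial (m + 1) * Nat.factorial (m + 1) =
      Nat.factorial (2 * m + 2) := by
    have h := Nat.choose_mul_factorial_mul_factorial (show m + 1 ≤ 2 * m + 2 by omega)
    have hsub : 2 * m + 2 - (m + 1) = m + 1 := by omega
    rw [hsub] at h
    have hcb : Nat.centralBinom (m + 1) = (2 * m + 2).choose (m + 1) := by
      rw [Nat.centralBinom_eq_two_mul_choose, show 2 * (m + 1) = 2 * m + 2 by ring]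
    rw [hcb]
    exact_mod_cast congrArg (Nat.cast (R := ℝ)) h
  have hE : (Nat.factorial (m + 2) : ℝ) = ((m : ℝ) + 2) * Nat.factorial (m + 1) := by
    rw [Nat.factorial_succ]
    push_cast
    ring
  have hFm1 : (Nat.factorial (m + 1) : ℝ) ≠ 0 := by positivity
  have hcbf : (Nat.centralBinom (m + 1) : ℝ) * Nat.factorial (m + 1) =
      2 ^ (m + 1) * Nat.doubleFactorial (2 * m + 1) := by
    have := hD
    rw [hB] at this
    have h' : ((Nat.centralBinom (m + 1) : ℝ) * Nat.factorial (m + 1)) * Nat.factorial (m + 1) =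
        (2 ^ (m + 1) * Nat.doubleFactorial (2 * m + 1)) * Nat.factorial (m + 1) := by
      linear_combination this
    exact mul_right_cancel₀ hFm1 h'
  have hfac4 : (Nat.factorial (2 * m + 4) : ℝ) ≠ 0 := by positivity
  have hp : (2:ℝ) ^ (2 * m + 3) ≠ 0 := by positivity
  rw [div_eq_div_iff hfac4 hp]
  have hpw : (2:ℝ) ^ (2 * m + 3) = 2 ^ (m + 1) * 2 ^ (m + 2) := by
    rw [← pow_add]
    congr 1
    omega
  calc (Nat.doubleFactorial (2 * m + 3) : ℝ) * Nat.doubleFactorial (2 * m + 1) * 2 ^ (2 * m + 3)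
      = (Nat.doubleFactorial (2 * m + 3) : ℝ) *
          (2 ^ (m + 1) * Nat.doubleFactorial (2 * m + 1)) * 2 ^ (m + 2) := by
        rw [hpw]; ring
    _ = (Nat.doubleFactorial (2 * m + 3) : ℝ) *
          (Nat.centralBinom (m + 1) * Nat.factorial (m + 1)) * 2 ^ (m + 2) := by rw [hcbf]
    _ = (Nat.doubleFactorial (2 * m + 3) : ℝ) *
          ((((m : ℝ) + 2) * catalan (m + 1)) * Nat.factorial (m + 1)) * 2 ^ (m + 2) := by
        rw [hC]
    _ = (catalan (m + 1) : ℝ) *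
          (2 ^ (m + 2) * (((m : ℝ) + 2) * Nat.factorial (m + 1)) *
            Nat.doubleFactorial (2 * m + 3)) := by ring
    _ = (catalan (m + 1) : ℝ) *
          (2 ^ (m + 2) * (Nat.factorial (m + 2) : ℝ) * Nat.doubleFactorial (2 * m + 3)) := by
        rw [hE]
    _ = (catalan (m + 1) : ℝ) * Nat.factorial (2 * m + 4) := by rw [← hA]

theorem hasSum_doubleFactorial_series_closed_form (x : ℝ) (hx0 : 0 < x) (hx1 : x < 1) :
    HasSum
      (fun m : ℕ =>
        ((Nat.doubleFactorial (2 * (m + 1) + 1) : ℝ) *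
            (Nat.doubleFactorial (2 * (m + 1) - 1) : ℝ) /
          (Nat.factorial (2 * (m + 1) + 2) : ℝ)) * x ^ (m + 1))
      ((1 - x / 2 - Real.sqrt (1 - x)) / x) := by
  set f : ℕ → ℝ := fun n => dd n * x ^ n with hf
  have hxnn : (0:ℝ) ≤ x := le_of_lt hx0
  -- summability in norm
  have hnorm : Summable fun n => ‖f n‖ := by
    apply Summable.of_nonneg_of_le (fun n => norm_nonneg _) (fun n => ?_)
      (summable_geometric_of_lt_one hxnn hx1)
    have : ‖f n‖ = |dd n| * x ^ n := by
      rw [hf]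
      simp only [Real.norm_eq_abs, abs_mul, abs_pow, abs_of_nonneg hxnn]
    rw [this]
    calc |dd n| * x ^ n ≤ 1 * x ^ n := by
          exact mul_le_mul_of_nonneg_right (dd_abs_le n) (pow_nonneg hxnn n)
      _ = x ^ n := one_mul _
  have hsummf : Summable f := by
    exact Summable.of_norm hnorm
  set T : ℝ := ∑' n, f n with hTdef
  have hT : HasSum f T := hsummf.hasSum
  -- Cauchy product: T * T = 1 - x
  have hcauchy : T * T = ∑' n, ∑ kl ∈ Finset.HasAntidiagonal.antidiagonal n, f kl.1 * f kl.2 :=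
    tsum_mul_tsum_eq_tsum_sum_antidiagonal_of_summable_norm hnorm hnorm
  have hconv : (fun n => ∑ kl ∈ Finset.HasAntidiagonal.antidiagonal n, f kl.1 * f kl.2) =
      fun n => if n = 0 then 1 else if n = 1 then -x else 0 := by
    funext n
    have : ∑ kl ∈ Finset.HasAntidiagonal.antidiagonal n, f kl.1 * f kl.2 =
        (∑ kl ∈ Finset.HasAntidiagonal.antidiagonal n, dd kl.1 * dd kl.2) * x ^ n := by
      rw [Finset.sum_mul]
      refine Finset.sum_congr rfl fun kl hkl => ?_
      have hkl' : kl.1 + kl.2 = n := Finset.HasAntidiagonal.mem_antidiagonal.mp hkl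
      rw [hf]
      simp only
      rw [← hkl', pow_add]
      ring
    rw [this, dd_conv n]
    rcases n with _ | n
    · simp
    · rcases n with _ | n
      · norm_num
      · simp
  have hTT : T * T = 1 - x := by
    rw [hcauchy, hconv]
    have hs : HasSum (fun n => if n = 0 then 1 else if n = 1 then -x else 0)
        (∑ n ∈ ({0, 1} : Finset ℕ), if n = 0 then 1 else if n = 1 then -x else 0) := by
      apply hasSum_sum_of_ne_finset_zero
      intro b hb
      simp only [Finset.mem_insert, Finset.mem_singleton] at hb
      push_neg at hb
      simp [hb.1, hb.2]
    rw [hs.tsum_eq, Finset.sum_pair (by norm_num : (0:ℕ) ≠ 1)]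
    norm_num
    ring
  -- positivity of T
  have hb_summable : Summable fun n : ℕ => (catalan n : ℝ) / 2 ^ (2 * n + 1) := by
    apply summable_of_sum_range_le (c := 1) (fun n => by positivity)
    intro n
    rw [psum n]
    have : (0:ℝ) ≤ (Nat.centralBinom n : ℝ) / 4 ^ n := by positivity
    linarith
  have hb_tsum_le : (∑' n : ℕ, (catalan n : ℝ) / 2 ^ (2 * n + 1)) ≤ 1 := by
    apply Real.tsum_le_of_sum_range_le (fun n => by positivity)
    intro n
    rw [psum n]
    have : (0:ℝ) ≤ (Nat.centralBinom n : ℝ) / 4 ^ n := by positivity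
    linarith
  have hg_summable : Summable fun n : ℕ => (catalan n : ℝ) / 2 ^ (2 * n + 1) * x ^ (n + 1) := by
    apply Summable.of_nonneg_of_le (fun n => by positivity) (fun n => ?_) hb_summable
    have hxp : x ^ (n + 1) ≤ 1 := pow_le_one₀ hxnn (le_of_lt hx1)
    calc (catalan n : ℝ) / 2 ^ (2 * n + 1) * x ^ (n + 1)
        ≤ (catalan n : ℝ) / 2 ^ (2 * n + 1) * 1 := by
          apply mul_le_mul_of_nonneg_left hxp (by positivity)
      _ = (catalan n : ℝ) / 2 ^ (2 * n + 1) := mul_one _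
  have hg_le : (∑' n : ℕ, (catalan n : ℝ) / 2 ^ (2 * n + 1) * x ^ (n + 1)) ≤ 1 := by
    refine le_trans (Summable.tsum_le_tsum (fun n => ?_) hg_summable hb_summable) hb_tsum_le
    have hxp : x ^ (n + 1) ≤ 1 := pow_le_one₀ hxnn (le_of_lt hx1)
    calc (catalan n : ℝ) / 2 ^ (2 * n + 1) * x ^ (n + 1)
        ≤ (catalan n : ℝ) / 2 ^ (2 * n + 1) * 1 := by
          apply mul_le_mul_of_nonneg_left hxp (by positivity)
      _ = (catalan n : ℝ) / 2 ^ (2 * n + 1) := mul_one _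
  have hshift1 : HasSum (fun n => f (n + 1)) (T - ∑ i ∈ range 1, f i) :=
    (hasSum_nat_add_iff' 1).mpr hT
  have hfeq1 : (fun n => f (n + 1)) =
      fun n => -((catalan n : ℝ) / 2 ^ (2 * n + 1) * x ^ (n + 1)) := by
    funext n
    rw [hf]
    simp only [dd]
    ring
  have hT0 : 0 ≤ T := by
    have hsum0 : ∑ i ∈ range 1, f i = 1 := by
      simp [hf, dd]
    rw [hsum0] at hshift1
    rw [hfeq1] at hshift1
    have := hshift1.tsum_eq
    rw [tsum_neg] at this
    have hG := hg_le
    -- T - 1 = -(tsum g), tsum g ≤ 1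
    have : T - 1 = -(∑' n, (catalan n : ℝ) / 2 ^ (2 * n + 1) * x ^ (n + 1)) := this.symm
    linarith
  have hsqrt : Real.sqrt (1 - x) = T := by
    rw [show (1:ℝ) - x = T ^ 2 by rw [sq]; exact hTT.symm]
    exact Real.sqrt_sq hT0
  -- shift by 2 and rescale
  have hshift2 : HasSum (fun n => f (n + 2)) (T - ∑ i ∈ range 2, f i) :=
    (hasSum_nat_add_iff' 2).mpr hT
  have hsum2 : ∑ i ∈ range 2, f i = 1 + -(x / 2) := by
    rw [Finset.sum_range_succ, Finset.sum_range_one]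
    rw [hf]
    simp only [dd]
    norm_num [catalan_zero]
    ring
  rw [hsum2] at hshift2
  have hxne : x ≠ 0 := ne_of_gt hx0
  have hfinal := (hshift2.neg).div_const x
  have hval : -(T - (1 + -(x / 2))) / x = (1 - x / 2 - Real.sqrt (1 - x)) / x := by
    rw [hsqrt]
    ring_nf
  rw [hval] at hfinal
  have hterm : (fun m : ℕ =>
      ((Nat.doubleFactorial (2 * (m + 1) + 1) : ℝ) *
          (Nat.doubleFactorial (2 * (m + 1) - 1) : ℝ) /
        (Nat.factorial (2 * (m + 1) + 2) : ℝ)) * x ^ (m + 1)) =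
      fun n => -(f (n + 2)) / x := by
    funext m
    rw [show 2 * (m + 1) + 1 = 2 * m + 3 by ring, show 2 * (m + 1) - 1 = 2 * m + 1 by omega,
      show 2 * (m + 1) + 2 = 2 * m + 4 by ring, coef m]
    have hfm : f (m + 2) = -((catalan (m + 1) : ℝ) / 2 ^ (2 * m + 3)) * x ^ (m + 2) := by
      rw [hf]
      simp only
      rw [show m + 2 = m + 1 + 1 from rfl]
      simp only [dd]
      rw [show 2 * (m + 1) + 1 = 2 * m + 3 by ring]
    rw [hfm, pow_succ x (m + 1)]
    field_simp
  rw [hterm]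
  exact hfinal
end

section
/- For every real x with 0 < x < 1, the series Σ_{m=1}^∞ 2m · ((2m+1)!!·(2m-1)!! / (2m+2)!) · x^m converges and equals (1/x) · ( (1-x)^{-1/2} - 2 + √(1-x) ). -/
set_option maxHeartbeats 1000000

open Real

noncomputable def cc (n : ℕ) : ℝ :=
  (Nat.doubleFactorial (2 * n - 1) : ℝ) / (2 ^ n * Nat.factorial n)

lemma cc_pos (n : ℕ) : 0 < cc n := by
  have h1 : (0:ℝ) < (Nat.doubleFactorial (2*n-1) : ℝ) := by
    exact_mod_cast Nat.doubleFactorial_pos _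
  have h2 : (0:ℝ) < 2 ^ n * Nat.factorial n := by positivity
  exact div_pos h1 h2

lemma cc_zero : cc 0 = 1 := by simp [cc, Nat.doubleFactorial]

lemma dfac_succ (n : ℕ) :
    Nat.doubleFactorial (2 * (n+1) - 1) = (2*n+1) * Nat.doubleFactorial (2*n - 1) := by
  cases n with
  | zero => rfl
  | succ m =>
    have h1 : 2 * (m+1+1) - 1 = (2*(m+1)-1) + 2 := by omega
    rw [h1, Nat.doubleFactorial_add_two]
    have : 2*(m+1)-1+2 = 2*(m+1)+1 := by omega
    rw [this]

lemma cc_succ (n : ℕ) : 2 * ((n:ℝ)+1) * cc (n+1) = (2*(n:ℝ)+1) * cc n := by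
  unfold cc
  rw [dfac_succ]
  have h2 : ((Nat.factorial n : ℝ)) ≠ 0 := by positivity
  rw [Nat.factorial_succ]
  push_cast
  field_simp
  ring

lemma cc_succ' (n : ℕ) : cc (n+1) = (2*(n:ℝ)+1)/(2*((n:ℝ)+1)) * cc n := by
  have h := cc_succ n
  have h2 : (2:ℝ)*((n:ℝ)+1) ≠ 0 := by positivity
  field_simp
  linarith [h]

lemma cc_le_one (n : ℕ) : cc n ≤ 1 := by
  induction n with
  | zero => simp [cc_zero]
  | succ m ih =>
    rw [cc_succ']
    have h1 : (2*(m:ℝ)+1)/(2*((m:ℝ)+1)) ≤ 1 := by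
      rw [div_le_one (by positivity)]; linarith
    nlinarith [cc_pos m, (cc_pos m).le]

lemma summable_f {x : ℝ} (hx : |x| < 1) : Summable fun n => cc n * x ^ n := by
  apply Summable.of_norm_bounded (summable_geometric_of_lt_one (abs_nonneg x) hx)
  intro n
  rw [norm_mul, norm_pow, Real.norm_eq_abs, Real.norm_eq_abs, abs_of_pos (cc_pos n)]
  calc cc n * |x|^n ≤ 1 * |x|^n :=
        mul_le_mul_of_nonneg_right (cc_le_one n) (by positivity)
    _ = |x|^n := one_mul _

lemma summable_h {x : ℝ} (hx : |x| < 1) :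
    Summable fun n => cc n / ((n:ℝ)+1) * x ^ (n+1) := by
  apply Summable.of_norm_bounded (summable_geometric_of_lt_one (abs_nonneg x) hx)
  intro n
  rw [norm_mul, norm_pow, Real.norm_eq_abs, Real.norm_eq_abs]
  have h1 : |cc n / ((n:ℝ)+1)| ≤ 1 := by
    have hp : (0:ℝ) < cc n / ((n:ℝ)+1) := div_pos (cc_pos n) (by positivity)
    rw [abs_of_pos hp, div_le_one (by positivity)]
    calc cc n ≤ 1 := cc_le_one n
      _ ≤ (n:ℝ)+1 := by linarith [Nat.cast_nonneg (α := ℝ) n]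
  calc |cc n / ((n:ℝ)+1)| * |x|^(n+1) ≤ 1 * |x|^(n+1) :=
        mul_le_mul_of_nonneg_right h1 (by positivity)
    _ = |x|^n * |x| := by ring
    _ ≤ |x|^n * 1 := by
        apply mul_le_mul_of_nonneg_left hx.le (by positivity)
    _ = |x|^n := mul_one _

lemma summable_aux {r : ℝ} (h0 : 0 ≤ r) (h1 : r < 1) :
    Summable fun n : ℕ => (n:ℝ) * r ^ (n-1) := by
  by_cases hr : r = 0
  · subst hr
    apply summable_of_ne_finset_zero (s := {1})
    intro n hn
    match n, hn with
    | 0, _ => simp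
    | (m+2), _ => simp [pow_succ]
  · have hs := summable_pow_mul_geometric_of_norm_lt_one (R := ℝ) 1
      (by rwa [Real.norm_eq_abs, abs_of_nonneg h0])
    apply (hs.mul_left r⁻¹).congr
    intro n
    cases n with
    | zero => simp
    | succ m =>
      simp only [pow_one, Nat.add_sub_cancel, pow_succ]
      field_simp

lemma summable_f' {x : ℝ} (hx : |x| < 1) :
    Summable fun n => cc n * ((n:ℝ) * x ^ (n-1)) := by
  apply Summable.of_norm_bounded (summable_aux (abs_nonneg x) hx)
  intro n
  rw [norm_mul, norm_mul, norm_pow, Real.norm_eq_abs, Real.norm_eq_abs,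
    Real.norm_eq_abs, abs_of_pos (cc_pos n), abs_of_nonneg (Nat.cast_nonneg n)]
  calc cc n * ((n:ℝ) * |x|^(n-1)) ≤ 1 * ((n:ℝ) * |x|^(n-1)) :=
        mul_le_mul_of_nonneg_right (cc_le_one n) (by positivity)
    _ = (n:ℝ) * |x|^(n-1) := one_mul _

lemma hasDerivAt_tsum_f {x : ℝ} (hx : |x| < 1) :
    HasDerivAt (fun y => ∑' n, cc n * y ^ n)
      (∑' n, cc n * ((n:ℝ) * x ^ (n-1))) x := by
  set r : ℝ := (|x| + 1) / 2 with hr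
  have hxr : |x| < r := by rw [hr]; linarith
  have hr1 : r < 1 := by rw [hr]; linarith
  have hr0 : 0 ≤ r := by positivity
  have hmem : x ∈ Set.Ioo (-r) r := by
    obtain ⟨a, b⟩ := abs_lt.mp hxr; exact ⟨a, b⟩
  exact hasDerivAt_tsum_of_isPreconnected (summable_aux hr0 hr1)
    isOpen_Ioo (convex_Ioo (-r) r).isPreconnected
    (fun n y _ => (hasDerivAt_pow n y).const_mul (cc n))
    (fun n y hy => by
      have hyr : |y| ≤ r := by
        rw [abs_le]; exact ⟨hy.1.le, hy.2.le⟩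
      rw [norm_mul, norm_mul, norm_pow, Real.norm_eq_abs, Real.norm_eq_abs,
        Real.norm_eq_abs, abs_of_pos (cc_pos n), abs_of_nonneg (Nat.cast_nonneg n)]
      calc cc n * ((n:ℝ) * |y|^(n-1)) ≤ 1 * ((n:ℝ) * r^(n-1)) := by
            apply mul_le_mul (cc_le_one n) _ (by positivity) (by norm_num)
            exact mul_le_mul_of_nonneg_left (pow_le_pow_left₀ (abs_nonneg y) hyr _)
              (Nat.cast_nonneg n)
        _ = (n:ℝ) * r^(n-1) := one_mul _)
    hmem (summable_f hx) hmem

lemma hasDerivAt_tsum_h {x : ℝ} (hx : |x| < 1) :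
    HasDerivAt (fun y => ∑' n, cc n / ((n:ℝ)+1) * y ^ (n+1))
      (∑' n, cc n * x ^ n) x := by
  set r : ℝ := (|x| + 1) / 2 with hr
  have hxr : |x| < r := by rw [hr]; linarith
  have hr1 : r < 1 := by rw [hr]; linarith
  have hr0 : 0 ≤ r := by positivity
  have hmem : x ∈ Set.Ioo (-r) r := by
    obtain ⟨a, b⟩ := abs_lt.mp hxr; exact ⟨a, b⟩
  apply hasDerivAt_tsum_of_isPreconnected (g' := fun n y => cc n * y ^ n)
    (summable_geometric_of_lt_one hr0 hr1)
    isOpen_Ioo (convex_Ioo (-r) r).isPreconnected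
    (fun n y _ => by
      have h := (hasDerivAt_pow (n+1) y).const_mul (cc n / ((n:ℝ)+1))
      have hne : ((n:ℝ)+1) ≠ 0 := by positivity
      refine h.congr_deriv ?_
      simp only [Nat.add_sub_cancel, Nat.cast_add, Nat.cast_one]
      field_simp)
    (fun n y hy => by
      have hyr : |y| ≤ r := by
        rw [abs_le]; exact ⟨hy.1.le, hy.2.le⟩
      rw [norm_mul, norm_pow, Real.norm_eq_abs, Real.norm_eq_abs,
        abs_of_pos (cc_pos n)]
      calc cc n * |y|^n ≤ 1 * r^n := by
            apply mul_le_mul (cc_le_one n) (pow_le_pow_left₀ (abs_nonneg y) hyr _)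
              (by positivity) (by norm_num)
        _ = r^n := one_mul _)
    hmem (summable_h hx) hmem

lemma ode {x : ℝ} (hx : |x| < 1) :
    2 * (1 - x) * (∑' n, cc n * ((n:ℝ) * x ^ (n-1))) = ∑' n, cc n * x ^ n := by
  have h1 : HasSum (fun n => cc n * ((n:ℝ) * x ^ (n-1)))
      (∑' n, cc n * ((n:ℝ) * x ^ (n-1))) := (summable_f' hx).hasSum
  set T := ∑' n, cc n * ((n:ℝ) * x ^ (n-1)) with hT
  have h2 : HasSum (fun n => cc (n+1) * (((n:ℝ)+1) * x ^ n)) T := by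
    have h := (hasSum_nat_add_iff' 1).mpr h1
    have he : (fun n => cc (n+1) * ((↑(n+1):ℝ) * x ^ (n+1-1)))
        = fun n => cc (n+1) * (((n:ℝ)+1) * x ^ n) := by
      funext n
      push_cast [Nat.add_sub_cancel]
      ring
    rw [he] at h
    simpa using h
  have h3 := (h2.mul_left 2).sub (h1.mul_left (2*x))
  have he2 : (fun n => 2 * (cc (n+1) * (((n:ℝ)+1) * x ^ n))
      - 2*x * (cc n * ((n:ℝ) * x ^ (n-1)))) = fun n => cc n * x ^ n := by
    funext n
    cases n with
    | zero =>
      have h0 := cc_succ 0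
      simp only [Nat.cast_zero] at h0 ⊢
      simp only [pow_zero, zero_mul, mul_zero, sub_zero, mul_one]
      linarith
    | succ m =>
      have hc := cc_succ (m+1)
      push_cast [Nat.add_sub_cancel] at hc ⊢
      linear_combination x^(m+1) * hc
  rw [he2] at h3
  have h4 := (summable_f hx).hasSum
  have := h3.unique h4
  linarith [this]

lemma sqrt_deriv {y : ℝ} (hy : y < 1) :
    HasDerivAt (fun z => Real.sqrt (1 - z)) (-(1 / (2 * Real.sqrt (1 - y)))) y := by
  have h1 : (0:ℝ) < 1 - y := by linarith
  have h := (Real.hasDerivAt_sqrt h1.ne').comp y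
    ((hasDerivAt_id y).const_sub 1)
  exact h.congr_deriv (by simp)

lemma F_deriv {y : ℝ} (hy : |y| < 1) :
    HasDerivAt (fun z => (∑' n, cc n * z ^ n) * Real.sqrt (1 - z)) 0 y := by
  have hy1 : y < 1 := lt_of_le_of_lt (le_abs_self y) hy
  have h1 : (0:ℝ) < 1 - y := by linarith
  have hs : (0:ℝ) < Real.sqrt (1 - y) := Real.sqrt_pos.2 h1
  have hs2 : Real.sqrt (1 - y) ^ 2 = 1 - y := Real.sq_sqrt h1.le
  have h := (hasDerivAt_tsum_f hy).mul (sqrt_deriv hy1)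
  have hexpr : (∑' n, cc n * ((n:ℝ) * y ^ (n-1))) * Real.sqrt (1 - y)
      + (∑' n, cc n * y ^ n) * -(1 / (2 * Real.sqrt (1 - y))) = 0 := by
    rw [← ode hy]
    set A := ∑' n, cc n * ((n:ℝ) * y ^ (n-1)) with hA
    field_simp
    linear_combination A * hs2
  rw [hexpr] at h
  exact h

lemma tsum_f_eq {x : ℝ} (hx0 : 0 ≤ x) (hx1 : x < 1) :
    (∑' n, cc n * x ^ n) = 1 / Real.sqrt (1 - x) := by
  have key : (∑' n, cc n * x ^ n) * Real.sqrt (1 - x) = 1 := by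
    have habs : ∀ y ∈ Set.Icc (0:ℝ) x, |y| < 1 := fun y hy => by
      rw [abs_of_nonneg hy.1]; linarith [hy.2]
    have hcon : ContinuousOn (fun z => (∑' n, cc n * z ^ n) * Real.sqrt (1 - z))
        (Set.Icc 0 x) := fun y hy =>
      ((F_deriv (habs y hy)).continuousAt).continuousWithinAt
    have hder : ∀ y ∈ Set.Ico (0:ℝ) x,
        HasDerivWithinAt (fun z => (∑' n, cc n * z ^ n) * Real.sqrt (1 - z))
          0 (Set.Ici y) y := fun y hy =>
      (F_deriv (habs y ⟨hy.1, hy.2.le⟩)).hasDerivWithinAt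
    have := constant_of_has_deriv_right_zero hcon hder x
      (Set.right_mem_Icc.2 hx0)
    rw [this]
    have hz : (∑' n, cc n * (0:ℝ) ^ n) = 1 := by
      rw [tsum_eq_single 0 (fun n hn => by simp [zero_pow hn])]
      simp [cc_zero]
    rw [hz]
    simp
  have hs : (0:ℝ) < Real.sqrt (1 - x) := Real.sqrt_pos.2 (by linarith)
  field_simp
  linarith [key]

lemma G_deriv {y : ℝ} (hy0 : 0 ≤ y) (hy1 : y < 1) :
    HasDerivAt (fun z => (∑' n, cc n / ((n:ℝ)+1) * z ^ (n+1))
      + 2 * Real.sqrt (1 - z)) 0 y := by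
  have hy : |y| < 1 := by rw [abs_of_nonneg hy0]; exact hy1
  have h1 : (0:ℝ) < 1 - y := by linarith
  have hs : (0:ℝ) < Real.sqrt (1 - y) := Real.sqrt_pos.2 h1
  have h := (hasDerivAt_tsum_h hy).add ((sqrt_deriv hy1).const_mul 2)
  refine h.congr_deriv ?_
  rw [tsum_f_eq hy0 hy1]
  field_simp
  ring

lemma tsum_h_eq {x : ℝ} (hx0 : 0 ≤ x) (hx1 : x < 1) :
    (∑' n, cc n / ((n:ℝ)+1) * x ^ (n+1)) = 2 - 2 * Real.sqrt (1 - x) := by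
  have hcon : ContinuousOn (fun z => (∑' n, cc n / ((n:ℝ)+1) * z ^ (n+1))
      + 2 * Real.sqrt (1 - z)) (Set.Icc 0 x) := fun y hy =>
    ((G_deriv hy.1 (by linarith [hy.2])).continuousAt).continuousWithinAt
  have hder : ∀ y ∈ Set.Ico (0:ℝ) x,
      HasDerivWithinAt (fun z => (∑' n, cc n / ((n:ℝ)+1) * z ^ (n+1))
        + 2 * Real.sqrt (1 - z)) 0 (Set.Ici y) y := fun y hy =>
    (G_deriv hy.1 (by linarith [hy.2])).hasDerivWithinAt
  have h := constant_of_has_deriv_right_zero hcon hder x (Set.right_mem_Icc.2 hx0)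
  have hz : (∑' n, cc n / ((n:ℝ)+1) * (0:ℝ) ^ (n+1)) = 0 := by
    have : (fun n : ℕ => cc n / ((n:ℝ)+1) * (0:ℝ) ^ (n+1)) = fun _ => 0 := by
      funext n; simp
    rw [this, tsum_zero]
  rw [hz] at h
  simp only [sub_zero, Real.sqrt_one, mul_one, zero_add] at h
  linarith [h]

theorem hasSum_weighted_doubleFactorial_series (x : ℝ) (hx0 : 0 < x) (hx1 : x < 1) :
    HasSum
      (fun m : ℕ =>
        (2 * ((m : ℝ) + 1)) *
          ((Nat.doubleFactorial (2 * (m + 1) + 1) : ℝ) *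
              (Nat.doubleFactorial (2 * (m + 1) - 1) : ℝ) /
            (Nat.factorial (2 * (m + 1) + 2) : ℝ)) * x ^ (m + 1))
      ((1 / x) * ((1 - x) ^ (-(1/2) : ℝ) - 2 + Real.sqrt (1 - x))) := by
  have hx : |x| < 1 := by rw [abs_of_pos hx0]; exact hx1
  have hxne : x ≠ 0 := hx0.ne'
  set s := Real.sqrt (1 - x) with hsdef
  have h1x : (0:ℝ) < 1 - x := by linarith
  have hs : 0 < s := Real.sqrt_pos.2 h1x
  have hs2 : s ^ 2 = 1 - x := Real.sq_sqrt h1x.le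
  have hA : HasSum (fun n => cc n * x ^ n) (1 / s) := by
    have := (summable_f hx).hasSum
    rwa [tsum_f_eq hx0.le hx1] at this
  have hB : HasSum (fun n => cc n / ((n:ℝ)+1) * x ^ (n+1)) (2 - 2 * s) := by
    have := (summable_h hx).hasSum
    rwa [tsum_h_eq hx0.le hx1] at this
  have hA1 : HasSum (fun m => cc (m+1) * x ^ (m+1)) (1 / s - 1) := by
    have h := (hasSum_nat_add_iff' 1).mpr hA
    simpa [cc_zero] using h
  have hB1 : HasSum (fun m => cc (m+1) / ((m:ℝ)+2) * x ^ (m+2)) (2 - 2*s - x) := by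
    have h := (hasSum_nat_add_iff' 1).mpr hB
    have he : (fun m => cc (m+1) / ((↑(m+1):ℝ)+1) * x ^ (m+1+1))
        = fun m => cc (m+1) / ((m:ℝ)+2) * x ^ (m+2) := by
      funext m; push_cast; ring_nf
    rw [he] at h
    simpa [cc_zero] using h
  have hB2 := hB1.mul_left x⁻¹
  have final := hA1.sub hB2
  have hterm : (fun m : ℕ =>
        (2 * ((m : ℝ) + 1)) *
          ((Nat.doubleFactorial (2 * (m + 1) + 1) : ℝ) *
              (Nat.doubleFactorial (2 * (m + 1) - 1) : ℝ) /
            (Nat.factorial (2 * (m + 1) + 2) : ℝ)) * x ^ (m + 1))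
      = fun m => cc (m+1) * x ^ (m+1)
          - x⁻¹ * (cc (m+1) / ((m:ℝ)+2) * x ^ (m+2)) := by
    funext m
    have hfac : (Nat.factorial (2*(m+1)+2) : ℝ)
        = 2^(m+2) * (Nat.factorial (m+2)) * (Nat.doubleFactorial (2*(m+1)+1)) := by
      have h1 := Nat.factorial_eq_mul_doubleFactorial (2*(m+1)+1)
      have h2 : 2*(m+1)+1+1 = 2*(m+2) := by omega
      rw [h2, Nat.doubleFactorial_two_mul] at h1
      have h3 : 2*(m+1)+2 = 2*(m+2) := by omega
      rw [show (2*(m+1)+2) = 2*(m+2) from h3]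
      rw [show (2*(m+2)) = 2*(m+1)+1+1 from h2.symm] at h1 ⊢
      push_cast [h1]
      ring
    have hd : (0:ℝ) < (Nat.doubleFactorial (2*(m+1)+1) : ℝ) := by
      exact_mod_cast Nat.doubleFactorial_pos _
    have hccm : cc (m+1)
        = (Nat.doubleFactorial (2*(m+1) - 1) : ℝ) / (2^(m+1) * Nat.factorial (m+1)) := rfl
    have hfm : (Nat.factorial (m+2) : ℝ) = ((m:ℝ)+2) * Nat.factorial (m+1) := by
      rw [show m+2 = (m+1)+1 from rfl, Nat.factorial_succ]; push_cast; ring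
    have hfp : (0:ℝ) < (Nat.factorial (m+1) : ℝ) := by
      exact_mod_cast Nat.factorial_pos _
    rw [hfac, hccm, hfm]
    field_simp
    ring
  have hsum : 1 / s - 1 - x⁻¹ * (2 - 2*s - x)
      = (1 / x) * ((1 - x) ^ (-(1/2) : ℝ) - 2 + s) := by
    have hrp : (1-x) ^ (-(1/2) : ℝ) = 1 / s := by
      rw [Real.rpow_neg h1x.le, ← Real.sqrt_eq_rpow, one_div]
    rw [hrp]
    field_simp
    linear_combination hs2
  rw [hterm, ← hsum]
  exact final
end

section
/- Let η ∈ ℝ³ with η ≠ 0, let v ∈ ℝ³, and let m be a natural number. Then the 2m-fold directional derivative (v·∇)^{2m} applied to the function x ↦ |x|^{2m-1}, evaluated at η, equals [(2m-1)!!]^2 · (|v|² - (v·η̂)²)^m / |η|, where η̂ = η/|η|. -/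
open RealInnerProductSpace
open scoped ContDiff

/-- The directional derivative operator `(v·∇)` acting on real functions on `ℝ³`. -/
noncomputable def dirDeriv (v : EuclideanSpace ℝ (Fin 3))
    (f : EuclideanSpace ℝ (Fin 3) → ℝ) : EuclideanSpace ℝ (Fin 3) → ℝ :=
  fun x => fderiv ℝ f x v

namespace IterAux

abbrev E3 : Type := EuclideanSpace ℝ (Fin 3)

def S : Set E3 := {x | x ≠ 0}

lemma isOpen_S : IsOpen S := isOpen_ne

lemma dd_eq {f : E3 → ℝ} {L : E3 →L[ℝ] ℝ} {x : E3} (h : HasFDerivAt f L x) (v : E3) :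
    dirDeriv v f x = L v := by rw [dirDeriv, h.fderiv]

lemma hasF_inner (v x : E3) : HasFDerivAt (fun y : E3 => ⟪v, y⟫) (innerSL ℝ v) x :=
  (innerSL ℝ v).hasFDerivAt

lemma hasF_normsq (x : E3) : HasFDerivAt (fun y : E3 => ‖y‖ ^ 2) (2 • innerSL ℝ x) x := by
  simpa using (hasFDerivAt_id x).norm_sq

lemma hasF_norm_zpow (a : ℤ) {x : E3} (hx : x ≠ 0) :
    HasFDerivAt (fun y : E3 => ‖y‖ ^ a) (((a : ℝ) * ‖x‖ ^ (a - 2)) • innerSL ℝ x) x := by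
  have hn : ‖x‖ ≠ 0 := norm_ne_zero_iff.2 hx
  have hsq : Real.sqrt (‖x‖ ^ 2) = ‖x‖ := Real.sqrt_sq (norm_nonneg x)
  have hg : HasDerivAt (fun t : ℝ => Real.sqrt t ^ a)
      ((a : ℝ) * Real.sqrt (‖x‖ ^ 2) ^ (a - 1) * (1 / (2 * Real.sqrt (‖x‖ ^ 2)))) (‖x‖ ^ 2) := by
    have h1 : HasDerivAt Real.sqrt (1 / (2 * Real.sqrt (‖x‖ ^ 2))) (‖x‖ ^ 2) :=
      Real.hasDerivAt_sqrt (by positivity)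
    have h2 : HasDerivAt (fun t : ℝ => t ^ a)
        ((a : ℝ) * Real.sqrt (‖x‖ ^ 2) ^ (a - 1)) (Real.sqrt (‖x‖ ^ 2)) :=
      hasDerivAt_zpow a _ (Or.inl (by rw [hsq]; exact hn))
    exact h2.comp _ h1
  have h3 := hg.comp_hasFDerivAt x (hasF_normsq x)
  have hfun : (fun y : E3 => Real.sqrt (‖y‖ ^ 2) ^ a) = fun y : E3 => ‖y‖ ^ a := by
    funext y; rw [Real.sqrt_sq (norm_nonneg y)]
  simp only [Function.comp_def] at h3
  rw [hfun] at h3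
  have hscal : ((a : ℝ) * Real.sqrt (‖x‖ ^ 2) ^ (a - 1) * (1 / (2 * Real.sqrt (‖x‖ ^ 2)))) •
      (2 • innerSL ℝ x) = ((a : ℝ) * ‖x‖ ^ (a - 2)) • innerSL ℝ x := by
    ext y
    have h4 : ‖x‖ ^ (a - 1) = ‖x‖ ^ (a - 2) * ‖x‖ := by
      rw [← zpow_add_one₀ hn]; congr 1; omega

    simp only [ContinuousLinearMap.smul_apply, smul_eq_mul, ContinuousLinearMap.coe_smul',
      Pi.smul_apply, hsq, h4]
    field_simp
    ring
  rw [hscal] at h3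
  exact h3


variable {v : E3}

/-- `T(x) = ‖v‖²‖x‖² - ⟪v,x⟫²`, annihilated by `(v·∇)`. -/
noncomputable def Tf (v : E3) : E3 → ℝ := fun y => ‖v‖ ^ 2 * ‖y‖ ^ 2 - ⟪v, y⟫ ^ 2

lemma hasF_T (v x : E3) :
    HasFDerivAt (Tf v)
      ((‖v‖ ^ 2) • (2 • innerSL ℝ x) - (2 * ⟪v, x⟫ ^ 1) • innerSL ℝ v) x := by
  have h1 := (hasF_normsq x).const_mul (‖v‖ ^ 2)
  have h2 := (hasDerivAt_pow 2 (⟪v, x⟫ : ℝ)).comp_hasFDerivAt x (hasF_inner v x)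
  have := h1.fun_sub h2
  unfold Tf
  simpa [Function.comp_def] using this

lemma dd_T (v x : E3) : dirDeriv v (Tf v) x = 0 := by
  rw [dd_eq (hasF_T v x)]
  simp only [ContinuousLinearMap.sub_apply, ContinuousLinearMap.smul_apply, smul_eq_mul,
    innerSL_apply_apply, pow_one]
  have h1 : ⟪x, v⟫ = ⟪v, x⟫ := real_inner_comm v x
  have h2 : ⟪v, v⟫ = ‖v‖ ^ 2 := real_inner_self_eq_norm_sq v
  rw [h1, h2]
  ring

lemma hasF_Tpow (v : E3) (j : ℕ) (x : E3) :
    HasFDerivAt (fun y => Tf v y ^ j)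
      (((j : ℝ) * Tf v x ^ (j - 1)) •
        ((‖v‖ ^ 2) • (2 • innerSL ℝ x) - (2 * ⟪v, x⟫ ^ 1) • innerSL ℝ v)) x :=
  (hasDerivAt_pow j (Tf v x)).comp_hasFDerivAt x (hasF_T v x)

lemma dd_Tpow (v : E3) (j : ℕ) (x : E3) : dirDeriv v (fun y => Tf v y ^ j) x = 0 := by
  rw [dd_eq (hasF_Tpow v j x)]
  have h0 := dd_T v x
  rw [dd_eq (hasF_T v x)] at h0
  simp only [ContinuousLinearMap.smul_apply, h0, smul_eq_mul, mul_zero]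


lemma dd_GA (c : ℝ) (j : ℕ) (a : ℤ) {x : E3} (hx : x ≠ 0) :
    dirDeriv v (fun y => c * (Tf v y ^ j * ‖y‖ ^ a)) x
      = c * ((a : ℝ) * Tf v x ^ j * ⟪v, x⟫ * ‖x‖ ^ (a - 2)) := by
  have hmul := ((hasF_Tpow v j x).fun_mul (hasF_norm_zpow a hx)).const_mul c
  rw [dd_eq hmul]
  have h0 := dd_T v x
  rw [dd_eq (hasF_T v x)] at h0
  simp only [ContinuousLinearMap.smul_apply, ContinuousLinearMap.add_apply, smul_eq_mul, h0,
    innerSL_apply_apply, mul_zero, add_zero]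
  rw [real_inner_comm x v]
  ring

lemma dd_GB (c : ℝ) (j : ℕ) (a : ℤ) {x : E3} (hx : x ≠ 0) :
    dirDeriv v (fun y => c * (Tf v y ^ j * (⟪v, y⟫ * ‖y‖ ^ a))) x
      = c * (Tf v x ^ j *
          (‖v‖ ^ 2 * ‖x‖ ^ a + (a : ℝ) * ⟪v, x⟫ ^ 2 * ‖x‖ ^ (a - 2))) := by
  have hmul := ((hasF_Tpow v j x).fun_mul
    ((hasF_inner v x).fun_mul (hasF_norm_zpow a hx))).const_mul c
  rw [dd_eq hmul]
  have h0 := dd_T v x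
  rw [dd_eq (hasF_T v x)] at h0
  simp only [ContinuousLinearMap.smul_apply, ContinuousLinearMap.add_apply, smul_eq_mul, h0,
    innerSL_apply_apply, mul_zero, add_zero]
  rw [real_inner_comm x v]
  have h2 : ⟪v, v⟫ = ‖v‖ ^ 2 := real_inner_self_eq_norm_sq v
  rw [h2]
  ring

/-! ### Smoothness -/

lemma smooth_nf (a : ℤ) : ContDiffOn ℝ ∞ (fun y : E3 => ‖y‖ ^ a) S := by
  intro x hx
  have hx' : (x : E3) ≠ 0 := hx
  have hn : ‖x‖ ≠ 0 := norm_ne_zero_iff.2 hx'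
  have h1 : ContDiffAt ℝ ∞ (fun y : E3 => ‖y‖) x := contDiffAt_norm ℝ hx'
  have h2 : ContDiffAt ℝ ∞ (fun t : ℝ => t ^ a) ‖x‖ := by
    rcases a with n | n
    · simp only [Int.ofNat_eq_coe, zpow_natCast]
      exact contDiffAt_id.pow n
    · simp only [zpow_negSucc]
      exact (contDiffAt_id.pow (n + 1)).inv (pow_ne_zero _ hn)
  exact ((h2.comp x h1).congr_of_eventuallyEq
    (Filter.Eventually.of_forall fun y => rfl)).contDiffWithinAt

lemma smooth_s (v : E3) : ContDiff ℝ ∞ (fun y : E3 => (⟪v, y⟫ : ℝ)) :=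
  (innerSL ℝ v).contDiff

lemma smooth_T (v : E3) : ContDiff ℝ ∞ (Tf v) := by
  have h1 : ContDiff ℝ ∞ (fun y : E3 => ‖y‖ ^ 2) := contDiff_norm_sq ℝ
  exact (contDiff_const.mul h1).sub ((smooth_s v).pow 2)

lemma smooth_q : ContDiff ℝ ∞ (fun y : E3 => ‖y‖ ^ 2) := contDiff_norm_sq ℝ

/-! ### infrastructure on the open set S -/

lemma diffAt {f : E3 → ℝ} (hf : ContDiffOn ℝ ∞ f S) {x : E3} (hx : x ∈ S) :
    DifferentiableAt ℝ f x :=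
  (hf.differentiableOn (by norm_num)).differentiableAt (isOpen_S.mem_nhds hx)

lemma smooth_dd {f : E3 → ℝ} (hf : ContDiffOn ℝ ∞ f S) :
    ContDiffOn ℝ ∞ (dirDeriv v f) S :=
  (hf.fderiv_of_isOpen isOpen_S (le_of_eq rfl)).clm_apply contDiffOn_const

lemma dd_congr {f g : E3 → ℝ} (h : Set.EqOn f g S) {x : E3} (hx : x ∈ S) :
    dirDeriv v f x = dirDeriv v g x := by
  have h' : f =ᶠ[nhds x] g := Filter.eventuallyEq_of_mem (isOpen_S.mem_nhds hx) h
  simp only [dirDeriv, h'.fderiv_eq]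

lemma iter_congr {f g : E3 → ℝ} (h : Set.EqOn f g S) (n : ℕ) :
    Set.EqOn ((dirDeriv v)^[n] f) ((dirDeriv v)^[n] g) S := by
  induction n generalizing f g with
  | zero => simpa using h
  | succ n ih =>
    intro x hx
    rw [Function.iterate_succ_apply, Function.iterate_succ_apply]
    exact ih (fun y hy => dd_congr h hy) hx

lemma dd_add {f g : E3 → ℝ} {x : E3} (hf : DifferentiableAt ℝ f x)
    (hg : DifferentiableAt ℝ g x) :
    dirDeriv v (fun y => f y + g y) x = dirDeriv v f x + dirDeriv v g x := by
  simp only [dirDeriv]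
  rw [fderiv_fun_add hf hg]
  rfl

lemma dd_mul {f g : E3 → ℝ} {x : E3} (hf : DifferentiableAt ℝ f x)
    (hg : DifferentiableAt ℝ g x) :
    dirDeriv v (fun y => f y * g y) x = f x * dirDeriv v g x + g x * dirDeriv v f x := by
  simp only [dirDeriv]
  rw [fderiv_fun_mul hf hg]
  simp [smul_eq_mul]

lemma dd_const_mul {f : E3 → ℝ} {x : E3} (hf : DifferentiableAt ℝ f x) (c : ℝ) :
    dirDeriv v (fun y => c * f y) x = c * dirDeriv v f x := by
  simp only [dirDeriv]
  rw [fderiv_const_mul hf]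
  rfl

lemma iter_add (n : ℕ) : ∀ (f g : E3 → ℝ), ContDiffOn ℝ ∞ f S → ContDiffOn ℝ ∞ g S →
    ∀ x ∈ S, (dirDeriv v)^[n] (fun y => f y + g y) x
      = (dirDeriv v)^[n] f x + (dirDeriv v)^[n] g x := by
  induction n with
  | zero => intro f g _ _ x _; simp
  | succ n ih =>
    intro f g hf hg x hx
    rw [Function.iterate_succ_apply, Function.iterate_succ_apply, Function.iterate_succ_apply]
    have heq : Set.EqOn (dirDeriv v (fun y => f y + g y))
        (fun y => dirDeriv v f y + dirDeriv v g y) S :=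
      fun y hy => dd_add (diffAt hf hy) (diffAt hg hy)
    rw [iter_congr heq n hx]
    exact ih _ _ (smooth_dd hf) (smooth_dd hg) x hx

lemma iter_const_mul (n : ℕ) : ∀ (f : E3 → ℝ) (c : ℝ), ContDiffOn ℝ ∞ f S →
    ∀ x ∈ S, (dirDeriv v)^[n] (fun y => c * f y) x = c * (dirDeriv v)^[n] f x := by
  induction n with
  | zero => intro f c _ x _; simp
  | succ n ih =>
    intro f c hf x hx
    rw [Function.iterate_succ_apply, Function.iterate_succ_apply]
    have heq : Set.EqOn (dirDeriv v (fun y => c * f y))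
        (fun y => c * dirDeriv v f y) S :=
      fun y hy => dd_const_mul (diffAt hf hy) c
    rw [iter_congr heq n hx]
    exact ih _ _ (smooth_dd hf) x hx


lemma dd_s (v x : E3) : dirDeriv v (fun y : E3 => (⟪v, y⟫ : ℝ)) x = ‖v‖ ^ 2 := by
  rw [dd_eq (hasF_inner v x), innerSL_apply_apply, real_inner_self_eq_norm_sq]

lemma dd_q (v x : E3) : dirDeriv v (fun y : E3 => ‖y‖ ^ 2) x = 2 * ⟪v, x⟫ := by
  rw [dd_eq (hasF_normsq x)]
  simp only [ContinuousLinearMap.smul_apply, innerSL_apply_apply, smul_eq_mul]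
  rw [real_inner_comm x v]
  norm_num

/-- Leibniz rule for multiplication by `⟪v,·⟫`. -/
lemma iter_s_mul (n : ℕ) : ∀ (f : E3 → ℝ), ContDiffOn ℝ ∞ f S → ∀ x ∈ S,
    (dirDeriv v)^[n + 1] (fun y => ⟪v, y⟫ * f y) x
      = ⟪v, x⟫ * (dirDeriv v)^[n + 1] f x
        + ((n : ℝ) + 1) * ‖v‖ ^ 2 * (dirDeriv v)^[n] f x := by
  induction n with
  | zero =>
    intro f hf x hx
    simp only [zero_add, Function.iterate_one, Function.iterate_zero, id_eq]
    rw [dd_mul (diffAt ((smooth_s v).contDiffOn) hx) (diffAt hf hx), dd_s]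
    ring
  | succ n ih =>
    intro f hf x hx
    rw [Function.iterate_succ_apply]
    have heq : Set.EqOn (dirDeriv v (fun y => ⟪v, y⟫ * f y))
        (fun y => ⟪v, y⟫ * dirDeriv v f y + ‖v‖ ^ 2 * f y) S := by
      intro y hy
      rw [dd_mul (diffAt ((smooth_s v).contDiffOn) hy) (diffAt hf hy), dd_s]
      ring
    rw [iter_congr heq (n + 1) hx]
    rw [iter_add (n + 1) _ _ (((smooth_s v).contDiffOn).mul (smooth_dd hf))
      (contDiffOn_const.mul hf) x hx]
    rw [ih _ (smooth_dd hf) x hx, iter_const_mul (n + 1) _ _ hf x hx]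
    rw [← Function.iterate_succ_apply, ← Function.iterate_succ_apply]
    push_cast
    ring

/-- Leibniz rule for multiplication by `‖·‖²`. -/
lemma iter_q_mul (n : ℕ) : ∀ (f : E3 → ℝ), ContDiffOn ℝ ∞ f S → ∀ x ∈ S,
    (dirDeriv v)^[n + 1] (fun y => ‖y‖ ^ 2 * f y) x
      = ‖x‖ ^ 2 * (dirDeriv v)^[n + 1] f x
        + 2 * ((n : ℝ) + 1) * ⟪v, x⟫ * (dirDeriv v)^[n] f x
        + ((n : ℝ) + 1) * (n : ℝ) * ‖v‖ ^ 2 * (dirDeriv v)^[n - 1] f x := by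
  induction n with
  | zero =>
    intro f hf x hx
    simp only [zero_add, Function.iterate_one, Function.iterate_zero, id_eq]
    rw [dd_mul (diffAt (smooth_q.contDiffOn) hx) (diffAt hf hx), dd_q]
    push_cast
    ring
  | succ n ih =>
    intro f hf x hx
    rw [Function.iterate_succ_apply]
    have heq : Set.EqOn (dirDeriv v (fun y => ‖y‖ ^ 2 * f y))
        (fun y => ‖y‖ ^ 2 * dirDeriv v f y + 2 * (⟪v, y⟫ * f y)) S := by
      intro y hy
      rw [dd_mul (diffAt (smooth_q.contDiffOn) hy) (diffAt hf hy), dd_q]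
      ring
    rw [iter_congr heq (n + 1) hx]
    rw [iter_add (n + 1) _ _ ((smooth_q.contDiffOn).mul (smooth_dd hf))
      (contDiffOn_const.mul (((smooth_s v).contDiffOn).mul hf)) x hx]
    rw [ih _ (smooth_dd hf) x hx, iter_const_mul (n + 1) _ 2
      (((smooth_s v).contDiffOn).mul hf) x hx]
    rw [iter_s_mul n _ hf x hx]
    rw [← Function.iterate_succ_apply, ← Function.iterate_succ_apply]
    rcases n with _ | k
    · push_cast
      ring
    · rw [show k + 1 - 1 = k from rfl, ← Function.iterate_succ_apply]
      push_cast
      ring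


lemma dfac_step (m : ℕ) :
    ((2 * (m + 1) - 1).doubleFactorial : ℝ)
      = (2 * (m : ℝ) + 1) * ((2 * m - 1).doubleFactorial : ℝ) := by
  rcases m with _ | k
  · norm_num [Nat.doubleFactorial]
  · have h : 2 * (k + 1 + 1) - 1 = (2 * (k + 1) - 1) + 2 := by omega
    rw [h, Nat.doubleFactorial_add_two]
    have h2 : ((2 * (k + 1) - 1) + 2 : ℕ) = 2 * (k + 1) + 1 := by omega
    rw [Nat.cast_mul, h2]
    push_cast
    ring

lemma dfac_step' (m : ℕ) :
    ((2 * m + 1).doubleFactorial : ℝ)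
      = (2 * (m : ℝ) + 1) * ((2 * m - 1).doubleFactorial : ℝ) := by
  have h := dfac_step m
  rw [show 2 * (m + 1) - 1 = 2 * m + 1 by omega] at h
  exact h

/-- The key identity. -/
lemma key (v : E3) (m : ℕ) : ∀ x ∈ S,
    (dirDeriv v)^[2 * m] (fun y : E3 => ‖y‖ ^ (2 * (m : ℤ) - 1)) x
      = ((2 * m - 1).doubleFactorial : ℝ) ^ 2 * Tf v x ^ m
          * ‖x‖ ^ (-(2 * (m : ℤ)) - 1) := by
  induction m with
  | zero =>
    intro x hx
    norm_num [Nat.doubleFactorial]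
  | succ m ih =>
    intro x hx
    have hxne : x ≠ 0 := hx
    have hn : ‖x‖ ≠ 0 := norm_ne_zero_iff.2 hxne
    set C : ℝ := ((2 * m - 1).doubleFactorial : ℝ) ^ 2 with hCdef
    set a : ℤ := -(2 * (m : ℤ)) - 1 with hadef
    set φ : E3 → ℝ := fun y => ‖y‖ ^ (2 * (m : ℤ) - 1) with hφdef
    have hφs : ContDiffOn ℝ ∞ φ S := smooth_nf _
    -- rewrite the casts
    simp only [Nat.cast_add, Nat.cast_one]
    have hsplit : Set.EqOn (fun y : E3 => ‖y‖ ^ (2 * ((m : ℤ) + 1) - 1))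
        (fun y => ‖y‖ ^ 2 * φ y) S := by
      intro y hy
      have hny : ‖y‖ ≠ 0 := norm_ne_zero_iff.2 hy
      show ‖y‖ ^ (2 * ((m : ℤ) + 1) - 1) = ‖y‖ ^ 2 * ‖y‖ ^ (2 * (m : ℤ) - 1)
      rw [show 2 * ((m : ℤ) + 1) - 1 = 2 + (2 * (m : ℤ) - 1) by ring, zpow_add₀ hny,
        ← zpow_natCast ‖y‖ 2]
      norm_num
    rw [show 2 * (m + 1) = (2 * m + 1) + 1 by ring]
    rw [iter_congr hsplit ((2 * m + 1) + 1) hx]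
    rw [iter_q_mul (2 * m + 1) φ hφs x hx]
    -- the three iterated derivatives of φ
    have hG0 : Set.EqOn ((dirDeriv v)^[2 * m] φ)
        (fun y => C * (Tf v y ^ m * ‖y‖ ^ a)) S := by
      intro y hy
      rw [ih y hy]
      ring
    have hG1 : Set.EqOn ((dirDeriv v)^[2 * m + 1] φ)
        (fun y => (C * (a : ℝ)) * (Tf v y ^ m * (⟪v, y⟫ * ‖y‖ ^ (a - 2)))) S := by
      intro y hy
      have hyne : y ≠ 0 := hy
      rw [Function.iterate_succ_apply', dd_congr hG0 hy, dd_GA C m a hyne]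
      ring
    have hI2 : (dirDeriv v)^[2 * m + 1 + 1] φ x
        = (C * (a : ℝ)) * (Tf v x ^ m *
            (‖v‖ ^ 2 * ‖x‖ ^ (a - 2) + ((a - 2 : ℤ) : ℝ) * ⟪v, x⟫ ^ 2 * ‖x‖ ^ (a - 4))) := by
      rw [Function.iterate_succ_apply', dd_congr hG1 hx, dd_GB (C * (a : ℝ)) m (a - 2) hxne]
      rw [show (a - 2) - 2 = a - 4 by ring]
    rw [hI2]
    rw [hG1 hx]
    simp only [Nat.add_sub_cancel]
    rw [hG0 hx]
    -- now pure algebra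
    rw [dfac_step' m, mul_pow, ← hCdef]
    beta_reduce
    have hmul : ∀ b : ℤ, ‖x‖ ^ 2 * ‖x‖ ^ b = ‖x‖ ^ (b + 2) := by
      intro b
      rw [← zpow_natCast ‖x‖ 2, ← zpow_add₀ hn]
      norm_num
      rw [add_comm]
    have e1 : ‖x‖ ^ (a - 2) = ‖x‖ ^ 2 * ‖x‖ ^ (a - 4) := by
      rw [hmul (a - 4), show a - 4 + 2 = a - 2 by ring]
    have e2 : ‖x‖ ^ a = ‖x‖ ^ 2 * (‖x‖ ^ 2 * ‖x‖ ^ (a - 4)) := by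
      rw [hmul (a - 4), show a - 4 + 2 = a - 2 by ring, hmul (a - 2),
        show a - 2 + 2 = a by ring]
    have e3 : ‖x‖ ^ (-(2 * ((m : ℤ) + 1)) - 1) = ‖x‖ ^ (a - 2) := by
      rw [show -(2 * ((m : ℤ) + 1)) - 1 = a - 2 by rw [hadef]; ring]
    rw [e3, e1, e2]
    rw [pow_succ (Tf v x) m, show Tf v x = ‖v‖ ^ 2 * ‖x‖ ^ 2 - ⟪v, x⟫ ^ 2 from rfl]
    simp only [hadef]
    push_cast
    ring

end IterAux


theorem iterated_dirDeriv_even_norm_pow (η v : EuclideanSpace ℝ (Fin 3)) (hη : η ≠ 0)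
    (m : ℕ) :
    ((dirDeriv v)^[2 * m] (fun x => ‖x‖ ^ (2 * (m : ℤ) - 1))) η =
      ((Nat.doubleFactorial (2 * m - 1) : ℝ)) ^ 2 *
        (‖v‖ ^ 2 - ⟪v, ‖η‖⁻¹ • η⟫ ^ 2) ^ m / ‖η‖ := by
  rw [IterAux.key v m η hη]
  have hn : ‖η‖ ≠ 0 := norm_ne_zero_iff.2 hη
  rw [real_inner_smul_right]
  have h1 : ‖v‖ ^ 2 - (‖η‖⁻¹ * ⟪v, η⟫) ^ 2 = IterAux.Tf v η / ‖η‖ ^ 2 := by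
    show _ = (‖v‖ ^ 2 * ‖η‖ ^ 2 - ⟪v, η⟫ ^ 2) / ‖η‖ ^ 2
    field_simp
  rw [h1, div_pow]
  have h2 : ‖η‖ ^ (-(2 * (m : ℤ)) - 1) = (‖η‖ ^ (2 * m) * ‖η‖)⁻¹ := by
    rw [show -(2 * (m : ℤ)) - 1 = -(((2 * m + 1 : ℕ) : ℤ)) by push_cast; ring,
      zpow_neg, zpow_natCast, pow_succ]
  rw [h2]
  have h3 : ((‖η‖ ^ 2) ^ m : ℝ) = ‖η‖ ^ (2 * m) := by
    rw [← pow_mul, mul_comm]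
  rw [h3]
  field_simp
end

section
/- Let η ∈ ℝ³ with η ≠ 0 and let v ∈ ℝ³ with |v| < 1. Then the series Σ_{m=0}^∞ (1/(2m)!) · (v·∇)^{2m}(|x|^{2m-1})|_{x=η} converges and equals 1 / ( |η| · √(1 - |v|² + (v·η̂)²) ), where η̂ = η/|η|. -/
open Filter Set


open RealInnerProductSpace

namespace LW

noncomputable def a (m : ℕ) : ℝ := (Nat.centralBinom m : ℝ) / 4 ^ m

lemma a_zero : a 0 = 1 := by simp [a, Nat.centralBinom]

lemma a_pos (m : ℕ) : 0 < a m :=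
  div_pos (by exact_mod_cast Nat.centralBinom_pos m) (by positivity)

lemma a_le_one (m : ℕ) : a m ≤ 1 := by
  rw [a, div_le_one (by positivity)]
  have h1 : Nat.centralBinom m ≤ (2 * m + 1).choose m :=
    Nat.choose_le_choose m (by omega)
  have h2 := Nat.choose_middle_le_pow m
  exact_mod_cast h1.trans h2

lemma a_rec (m : ℕ) : 2 * (m + 1 : ℝ) * a (m + 1) = (2 * m + 1) * a m := by
  have h := Nat.succ_mul_centralBinom_succ m
  have h' : ((m + 1) * Nat.centralBinom (m + 1) : ℝ)
      = 2 * (2 * m + 1) * Nat.centralBinom m := by exact_mod_cast h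
  rw [a, a]
  rw [pow_succ]
  linear_combination ((4:ℝ) ^ m)⁻¹ / 2 * h'

lemma summable_term {y : ℝ} (hy : |y| < 1) : Summable (fun m => a m * y ^ m) := by
  apply Summable.of_norm_bounded
    (summable_geometric_of_lt_one (abs_nonneg y) hy)
  intro m
  rw [norm_mul, norm_pow, Real.norm_eq_abs, Real.norm_eq_abs, abs_of_nonneg (a_pos m).le]
  exact mul_le_of_le_one_left (by positivity) (a_le_one m)

lemma summable_deriv_term {r : ℝ} (hr0 : 0 ≤ r) (hr : r < 1) :
    Summable (fun m : ℕ => (m : ℝ) * r ^ (m - 1)) := by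
  rw [← summable_nat_add_iff 1]
  have h1 : Summable (fun n : ℕ => (n : ℝ) ^ 1 * r ^ n) :=
    summable_pow_mul_geometric_of_norm_lt_one 1 (by rwa [Real.norm_eq_abs, abs_of_nonneg hr0])
  have h2 : Summable (fun n : ℕ => r ^ n) := summable_geometric_of_lt_one hr0 hr
  have := (h1.add h2)
  apply this.congr
  intro n
  simp only [Nat.add_sub_cancel, pow_one]
  push_cast
  ring

noncomputable def F (y : ℝ) : ℝ := ∑' m, a m * y ^ m

noncomputable def D (y : ℝ) : ℝ := ∑' m : ℕ, a m * ((m : ℝ) * y ^ (m - 1))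

lemma F_hasDerivAt {y : ℝ} (hy : |y| < 1) : HasDerivAt F (D y) y := by
  set r : ℝ := (1 + |y|) / 2 with hrdef
  have hyr : |y| < r := by rw [hrdef]; linarith
  have hr0 : 0 ≤ r := le_trans (abs_nonneg y) hyr.le
  have hr1 : r < 1 := by rw [hrdef]; linarith
  apply hasDerivAt_tsum_of_isPreconnected
    (summable_deriv_term hr0 hr1) (isOpen_Ioo (a := -r) (b := r))
    (convex_Ioo _ _).isPreconnected
    (g := fun m z => a m * z ^ m) (g' := fun m z => a m * ((m : ℝ) * z ^ (m - 1)))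
    (y₀ := 0)
  · intro m z _
    exact (hasDerivAt_pow m z).const_mul (a m)
  · intro m z hz
    have hzr : |z| ≤ r := by
      rw [abs_le]; exact ⟨hz.1.le, hz.2.le⟩
    rw [norm_mul, norm_mul]
    calc ‖a m‖ * (‖(m : ℝ)‖ * ‖z ^ (m - 1)‖) ≤ 1 * (m * r ^ (m - 1)) := by
          apply mul_le_mul
          · rw [Real.norm_eq_abs, abs_of_nonneg (a_pos m).le]; exact a_le_one m
          · apply mul_le_mul
            · simp
            · rw [norm_pow, Real.norm_eq_abs]
              exact pow_le_pow_left₀ (abs_nonneg z) hzr _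
            · positivity
            · positivity
          · positivity
          · norm_num
      _ = m * r ^ (m - 1) := one_mul _
  · have hrpos : 0 < r := by rw [hrdef]; positivity
    exact ⟨by linarith, hrpos⟩
  · apply summable_of_ne_finset_zero (s := {0})
    intro m hm
    simp at hm
    simp [zero_pow hm]
  · exact ⟨by linarith [neg_abs_le y], by linarith [le_abs_self y]⟩

lemma summable_D {y : ℝ} (hy : |y| < 1) :
    Summable (fun m : ℕ => a m * ((m : ℝ) * y ^ (m - 1))) := by
  apply Summable.of_norm_bounded (summable_deriv_term (abs_nonneg y) hy)
  intro m
  rw [norm_mul, norm_mul]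
  calc ‖a m‖ * (‖(m : ℝ)‖ * ‖y ^ (m - 1)‖) ≤ 1 * (m * |y| ^ (m - 1)) := by
        apply mul_le_mul
        · rw [Real.norm_eq_abs, abs_of_nonneg (a_pos m).le]; exact a_le_one m
        · apply mul_le_mul <;> simp [norm_pow, le_refl]
        · positivity
        · norm_num
    _ = m * |y| ^ (m - 1) := one_mul _

lemma key_identity {y : ℝ} (hy : |y| < 1) : 2 * (1 - y) * D y = F y := by
  have hS := summable_D hy
  have hS2 : Summable (fun m : ℕ => a (m + 1) * (((m : ℝ) + 1) * y ^ m)) := by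
    have := (summable_nat_add_iff 1).2 hS
    apply this.congr
    intro n; push_cast; ring_nf
  have hshift : D y = ∑' m : ℕ, a (m + 1) * (((m : ℝ) + 1) * y ^ m) := by
    rw [D, Summable.tsum_eq_zero_add hS]
    simp
  have hyD : y * D y = ∑' m : ℕ, a m * ((m : ℝ) * y ^ m) := by
    rw [D, ← tsum_mul_left]
    congr 1; funext m
    cases m with
    | zero => simp
    | succ n => simp [pow_succ]; ring
  have hSy : Summable (fun m : ℕ => a m * ((m : ℝ) * y ^ m)) := by
    have := hS.mul_left y
    rw [show (fun i : ℕ => y * (a i * (i * y ^ (i - 1)))) = fun m : ℕ => a m * (m * y ^ m)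
      from funext fun m => by cases m with
        | zero => simp
        | succ n => simp [pow_succ]; ring] at this
    exact this
  have expand : 2 * (1 - y) * D y = 2 * D y - 2 * (y * D y) := by ring
  rw [expand, hyD, hshift, ← tsum_mul_left, ← tsum_mul_left,
    ← Summable.tsum_sub (hS2.mul_left 2) (hSy.mul_left 2), F]
  congr 1; funext m
  linear_combination (y ^ m) * a_rec m


lemma F_zero : F 0 = 1 := by
  rw [F, tsum_eq_single 0 (fun m hm => by simp [zero_pow hm])]
  simp [a_zero]

lemma F_sq (w : ℝ) (h0 : -1 < w) (h1 : w < 1) : F w ^ 2 * (1 - w) = 1 := by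
  set s : Set ℝ := Set.Ioo (-1 : ℝ) 1 with hs
  have hmem : ∀ y ∈ s, |y| < 1 := fun y hy => abs_lt.2 ⟨hy.1, hy.2⟩
  set G : ℝ → ℝ := fun y => F y ^ 2 * (1 - y) with hG
  have hG' : ∀ y ∈ s, HasDerivAt G 0 y := by
    intro y hy
    have hF := F_hasDerivAt (hmem y hy)
    have h1d : HasDerivAt (fun z => F z ^ 2) (2 * F y ^ 1 * D y) y := by
      have h := hF.pow 2
      norm_num at h ⊢
      exact h
    have h2d : HasDerivAt (fun z => (1 : ℝ) - z) (-1) y := by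
      simpa using (hasDerivAt_id y).const_sub 1
    have := h1d.mul h2d
    have hval : 2 * F y ^ 1 * D y * (1 - y) + F y ^ 2 * -1 = 0 := by
      have hk := key_identity (hmem y hy)
      linear_combination F y * hk
    rw [hval] at this
    exact this
  have hconst : ∀ y ∈ s, G y = G 0 := by
    intro y hy
    have h0s : (0 : ℝ) ∈ s := by constructor <;> norm_num
    apply Convex.is_const_of_fderivWithin_eq_zero (convex_Ioo (-1 : ℝ) 1)
      (fun z hz => (hG' z hz).differentiableAt.differentiableWithinAt) _ hy h0s
    intro z hz
    rw [fderivWithin_of_isOpen isOpen_Ioo hz]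
    have := (hG' z hz).hasFDerivAt.fderiv
    rw [this]
    ext t
    simp
  have hF0 : F 0 = 1 := F_zero
  have := hconst w ⟨h0, h1⟩
  rw [hG] at this
  simpa [hF0] using this

lemma hasSum_central {w : ℝ} (h0 : -1 < w) (h1 : w < 1) :
    HasSum (fun m => a m * w ^ m) ((Real.sqrt (1 - w))⁻¹) := by
  have habs : |w| < 1 := abs_lt.2 ⟨h0, h1⟩
  have hsq := F_sq w h0 h1
  have h1w : (0 : ℝ) < 1 - w := by linarith
  have hFpos : 0 < F w := by
    by_contra hneg
    push_neg at hneg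
    have hFne : F w ≠ 0 := by
      intro h; rw [h] at hsq; simp at hsq
    have hFlt : F w < 0 := lt_of_le_of_ne hneg hFne
    have hF0 : F 0 = 1 := F_zero
    have hcont : ContinuousOn F (Set.uIcc w 0) := by
      intro z hz
      have hzmem : |z| < 1 := by
        rw [Set.uIcc_eq_union] at hz
        rcases hz with hz | hz <;> rw [abs_lt] <;>
          rcases hz with ⟨hz1, hz2⟩ <;> constructor <;> nlinarith
      exact (F_hasDerivAt hzmem).continuousAt.continuousWithinAt
    have h0mem : (0 : ℝ) ∈ Set.uIcc (F w) (F 0) := by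
      rw [Set.mem_uIcc]
      left; exact ⟨hFlt.le, by rw [hF0]; norm_num⟩
    obtain ⟨c, hc, hFc⟩ := intermediate_value_uIcc hcont h0mem
    have hcabs : |c| < 1 := by
      rw [Set.uIcc_eq_union] at hc
      rcases hc with hc | hc <;> rw [abs_lt] <;>
        rcases hc with ⟨hc1, hc2⟩ <;> constructor <;> nlinarith
    have := F_sq c (neg_lt_of_abs_lt hcabs) (lt_of_abs_lt hcabs)
    rw [hFc] at this
    simp at this
  have hFval : F w = (Real.sqrt (1 - w))⁻¹ := by
    have hsq' : F w ^ 2 = (1 - w)⁻¹ := by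
      field_simp at hsq ⊢
      linarith [hsq]
    have : F w = Real.sqrt ((1 - w)⁻¹) := by
      rw [← hsq', Real.sqrt_sq hFpos.le]
    rw [this, Real.sqrt_inv]
  have hsum := (summable_term habs).hasSum
  rwa [show ∑' m, a m * w ^ m = (Real.sqrt (1 - w))⁻¹ from hFval ▸ rfl] at hsum

end LW

namespace LW2

variable (u s r2 : ℝ)

noncomputable def Q (t : ℝ) : ℝ := u * t ^ 2 + 2 * s * t + r2

noncomputable def W : ℝ := u * r2 - s ^ 2

noncomputable def K : ℕ → ℝ
  | 0 => 1
  | m + 1 => (2 * m + 1) ^ 2 * K m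

lemma sq_lin (t : ℝ) : (s + u * t) ^ 2 = u * Q u s r2 t - W u s r2 := by
  simp [Q, W]; ring

lemma Q_hasDerivAt (x : ℝ) : HasDerivAt (Q u s r2) (2 * (s + u * x)) x := by
  have h1 := (((hasDerivAt_pow 2 x).const_mul u).add
    ((hasDerivAt_id x).const_mul (2 * s))).add_const r2
  have e : Q u s r2 = fun x => ((fun y : ℝ => u * y ^ 2) + fun y : ℝ => 2 * s * id y) x + r2 := by
    funext t; simp [Q]
  rw [e]
  refine h1.congr_deriv ?_
  norm_num
  ring

lemma Q_contDiff : ContDiff ℝ ⊤ (Q u s r2) := by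
  unfold Q; fun_prop

lemma isOpen_O : IsOpen {t : ℝ | 0 < Q u s r2 t} :=
  isOpen_lt continuous_const (Q_contDiff u s r2).continuous

lemma Qrpow_hasDerivAt (α : ℝ) {x : ℝ} (hQ : 0 < Q u s r2 x) :
    HasDerivAt (fun t => Q u s r2 t ^ α) ((α * Q u s r2 x ^ (α - 1)) * (2 * (s + u * x))) x :=
  (Real.hasDerivAt_rpow_const (Or.inl hQ.ne')).comp x (Q_hasDerivAt u s r2 x)

lemma Qrpow_contDiffOn (α : ℝ) :
    ContDiffOn ℝ ⊤ (fun t => Q u s r2 t ^ α) {t : ℝ | 0 < Q u s r2 t} := by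
  intro x hx
  exact ((Q_contDiff u s r2).contDiffAt.rpow_const_of_ne hx.ne').contDiffWithinAt

lemma deriv_Qrpow (α : ℝ) {x : ℝ} (hQ : 0 < Q u s r2 x) :
    deriv (fun t => Q u s r2 t ^ α) x = (2 * α) * (s + u * x) * Q u s r2 x ^ (α - 1) := by
  rw [(Qrpow_hasDerivAt u s r2 α hQ).deriv]; ring

/-- second derivative of a constant multiple of `Q ^ α` on the positivity set. -/
lemma deriv2_Qrpow (C α : ℝ) {x : ℝ} (hQ : 0 < Q u s r2 x) :
    deriv (deriv (fun t => C * Q u s r2 t ^ α)) x =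
      C * (2 * α * (2 * α - 1) * u) * Q u s r2 x ^ (α - 1)
        - C * (2 * α * (2 * α - 2) * W u s r2) * Q u s r2 x ^ (α - 2) := by
  have hO := isOpen_O u s r2
  have h1 : deriv (fun t => C * Q u s r2 t ^ α)
      =ᶠ[nhds x] (fun t => (C * (2 * α)) * ((s + u * t) * Q u s r2 t ^ (α - 1))) := by
    filter_upwards [hO.mem_nhds hQ] with t ht
    rw [deriv_const_mul _ ((Qrpow_hasDerivAt u s r2 α ht).differentiableAt),
      (Qrpow_hasDerivAt u s r2 α ht).deriv]
    ring
  rw [h1.deriv_eq]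
  have h2 : HasDerivAt (fun t => (C * (2 * α)) * ((s + u * t) * Q u s r2 t ^ (α - 1)))
      ((C * (2 * α)) * (u * Q u s r2 x ^ (α - 1) +
        (s + u * x) * (((α - 1) * Q u s r2 x ^ (α - 1 - 1)) * (2 * (s + u * x))))) x := by
    apply HasDerivAt.const_mul
    have hlin : HasDerivAt (fun t : ℝ => s + u * t) u x := by
      simpa using ((hasDerivAt_id x).const_mul u).const_add s
    exact hlin.mul (Qrpow_hasDerivAt u s r2 (α - 1) hQ)
  rw [h2.deriv]
  have hsq : (s + u * x) ^ 2 = u * Q u s r2 x - W u s r2 := sq_lin u s r2 x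
  rw [show α - 1 - 1 = α - 2 from by ring,
    show α - 1 = (α - 2) + 1 from by ring, Real.rpow_add hQ, Real.rpow_one]
  linear_combination (4 * C * α * (α - 1) * Q u s r2 x ^ (α - 2)) * hsq


lemma K_succ (m : ℕ) : K (m + 1) = (2 * m + 1) ^ 2 * K m := rfl

lemma deriv2_Qrpow' (α : ℝ) {x : ℝ} (hQ : 0 < Q u s r2 x) :
    deriv (deriv (fun t => Q u s r2 t ^ α)) x =
      (2 * α * (2 * α - 1) * u) * Q u s r2 x ^ (α - 1)
        - (2 * α * (2 * α - 2) * W u s r2) * Q u s r2 x ^ (α - 2) := by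
  have h := deriv2_Qrpow u s r2 1 α hQ
  simp only [one_mul] at h
  exact h

lemma iter_open {x : ℝ} (hx : 0 < Q u s r2 x) (n : ℕ) (f : ℝ → ℝ) :
    iteratedDerivWithin n f {t : ℝ | 0 < Q u s r2 t} x = iteratedDeriv n f x := by
  rw [iteratedDerivWithin_eq_iteratedFDerivWithin, iteratedDeriv_eq_iteratedFDeriv,
    iteratedFDerivWithin_of_isOpen n (isOpen_O u s r2) hx]

lemma iteratedDeriv_comb {c1 c2 β1 β2 : ℝ} {x : ℝ} (hQ : 0 < Q u s r2 x) (n : ℕ) :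
    iteratedDeriv n (fun t => c1 * Q u s r2 t ^ β1 + c2 * Q u s r2 t ^ β2) x
      = c1 * iteratedDeriv n (fun t => Q u s r2 t ^ β1) x
        + c2 * iteratedDeriv n (fun t => Q u s r2 t ^ β2) x := by
  have hO := isOpen_O u s r2
  have hxO : x ∈ {t : ℝ | 0 < Q u s r2 t} := hQ
  have hud : UniqueDiffOn ℝ {t : ℝ | 0 < Q u s r2 t} := hO.uniqueDiffOn
  have hc1 : ContDiffOn ℝ n (fun t => c1 * Q u s r2 t ^ β1) {t : ℝ | 0 < Q u s r2 t} :=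
    (contDiffOn_const.mul (Qrpow_contDiffOn u s r2 β1)).of_le le_top
  have hc2 : ContDiffOn ℝ n (fun t => c2 * Q u s r2 t ^ β2) {t : ℝ | 0 < Q u s r2 t} :=
    (contDiffOn_const.mul (Qrpow_contDiffOn u s r2 β2)).of_le le_top
  rw [← iter_open u s r2 hQ, ← iter_open u s r2 hQ, ← iter_open u s r2 hQ]
  rw [show (fun t => c1 * Q u s r2 t ^ β1 + c2 * Q u s r2 t ^ β2)
      = (fun t => c1 * Q u s r2 t ^ β1) + (fun t => c2 * Q u s r2 t ^ β2) from rfl]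
  rw [iteratedDerivWithin_add hxO hud (hc1 x hxO) (hc2 x hxO)]
  rw [iteratedDerivWithin_const_mul hxO hud c1 (((Qrpow_contDiffOn u s r2 β1).of_le le_top) x hxO)]
  rw [iteratedDerivWithin_const_mul hxO hud c2 (((Qrpow_contDiffOn u s r2 β2).of_le le_top) x hxO)]

lemma oneD (m : ℕ) : ∀ x : ℝ, 0 < Q u s r2 x →
    iteratedDeriv (2 * m) (fun t => Q u s r2 t ^ ((2 * (m : ℝ) - 1) / 2)) x
      = K m * W u s r2 ^ m * Q u s r2 x ^ (-(2 * (m : ℝ) + 1) / 2) := by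
  induction m using Nat.strong_induction_on with
  | _ m IH =>
    match m with
    | 0 =>
      intro x hQ
      norm_num [K]
    | 1 =>
      intro x hQ
      have hO := isOpen_O u s r2
      rw [show (2 * 1 : ℕ) = 0 + 1 + 1 from rfl, iteratedDeriv_succ', iteratedDeriv_succ',
        iteratedDeriv_zero]
      rw [show (2 * ((1 : ℕ) : ℝ) - 1) / 2 = (1 : ℝ) / 2 from by norm_num]
      rw [deriv2_Qrpow' u s r2 (1 / 2) hQ]
      rw [show (1 : ℝ) / 2 - 2 = -(2 * ((1 : ℕ) : ℝ) + 1) / 2 from by norm_num]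
      norm_num [K]
    | (p + 2) =>
      intro x hQ
      have hO := isOpen_O u s r2
      rw [show ((2 * (((p : ℕ) + 2 : ℕ) : ℝ) - 1) / 2) = (2 * ((p : ℝ) + 2) - 1) / 2 from by
        push_cast; ring]
      -- peel two derivatives from the inside
      rw [show 2 * (p + 2) = 2 * (p + 1) + 1 + 1 from by ring, iteratedDeriv_succ',
        iteratedDeriv_succ']
      have hcongr : iteratedDeriv (2 * (p + 1))
            (deriv (deriv (fun t => Q u s r2 t ^ ((2 * ((p : ℝ) + 2) - 1) / 2)))) x
          = iteratedDeriv (2 * (p + 1)) (fun t =>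
              ((2 * (p : ℝ) + 3) * (2 * (p : ℝ) + 2) * u) * Q u s r2 t ^ ((2 * ((p : ℝ) + 1) - 1) / 2)
                + (-((2 * (p : ℝ) + 3) * (2 * (p : ℝ) + 1)) * W u s r2) *
                    Q u s r2 t ^ ((2 * (p : ℝ) - 1) / 2)) x := by
        apply Filter.EventuallyEq.iteratedDeriv_eq
        filter_upwards [hO.mem_nhds hQ] with t ht
        rw [deriv2_Qrpow' u s r2 ((2 * ((p : ℝ) + 2) - 1) / 2) ht]
        rw [show (2 * ((p : ℝ) + 2) - 1) / 2 - 1 = (2 * ((p : ℝ) + 1) - 1) / 2 from by ring,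
          show (2 * ((p : ℝ) + 2) - 1) / 2 - 2 = (2 * (p : ℝ) - 1) / 2 from by ring]
        ring
      rw [hcongr, iteratedDeriv_comb u s r2 hQ]
      -- first term via IH (p+1)
      have hI1 : iteratedDeriv (2 * (p + 1))
            (fun t => Q u s r2 t ^ ((2 * ((p : ℝ) + 1) - 1) / 2)) x
          = K (p + 1) * W u s r2 ^ (p + 1) * Q u s r2 x ^ (-(2 * ((p : ℝ) + 1) + 1) / 2) := by
        have := IH (p + 1) (by omega) x hQ
        rw [show (2 * (((p : ℕ) + 1 : ℕ) : ℝ) - 1) / 2 = (2 * ((p : ℝ) + 1) - 1) / 2 from by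
          push_cast; ring, show (-(2 * (((p : ℕ) + 1 : ℕ) : ℝ) + 1) / 2)
            = -(2 * ((p : ℝ) + 1) + 1) / 2 from by push_cast; ring] at this
        exact this
      -- second term: two extra outer derivatives on the level-p function
      have hI2 : iteratedDeriv (2 * (p + 1))
            (fun t => Q u s r2 t ^ ((2 * (p : ℝ) - 1) / 2)) x
          = (K p * W u s r2 ^ p) *
              ((2 * (p : ℝ) + 1) * (2 * (p : ℝ) + 2) * u *
                  Q u s r2 x ^ (-(2 * ((p : ℝ) + 1) + 1) / 2)
                - (2 * (p : ℝ) + 1) * (2 * (p : ℝ) + 3) * W u s r2 *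
                    Q u s r2 x ^ (-(2 * ((p : ℝ) + 1) + 3) / 2)) := by
        rw [show 2 * (p + 1) = 2 * p + 1 + 1 from by ring, iteratedDeriv_succ,
          iteratedDeriv_succ]
        have hev : iteratedDeriv (2 * p) (fun t => Q u s r2 t ^ ((2 * (p : ℝ) - 1) / 2))
            =ᶠ[nhds x] (fun t => (K p * W u s r2 ^ p) *
              Q u s r2 t ^ (-(2 * (p : ℝ) + 1) / 2)) := by
          filter_upwards [hO.mem_nhds hQ] with t ht
          exact IH p (by omega) t ht
        rw [(hev.deriv).deriv_eq]
        rw [deriv2_Qrpow u s r2 (K p * W u s r2 ^ p) (-(2 * (p : ℝ) + 1) / 2) hQ]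
        rw [show -(2 * (p : ℝ) + 1) / 2 - 1 = -(2 * ((p : ℝ) + 1) + 1) / 2 from by ring,
          show -(2 * (p : ℝ) + 1) / 2 - 2 = -(2 * ((p : ℝ) + 1) + 3) / 2 from by ring]
        ring
      rw [hI1, hI2]
      rw [show (-(2 * (((p : ℕ) + 2 : ℕ) : ℝ) + 1) / 2) = -(2 * ((p : ℝ) + 1) + 3) / 2 from by
        push_cast; ring]
      simp only [show (p : ℕ) + 2 = (p + 1) + 1 from rfl, K_succ]
      push_cast
      ring

end LW2

namespace LW3

abbrev E := EuclideanSpace ℝ (Fin 3)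

lemma isOpen_U : IsOpen {x : E | x ≠ 0} := isOpen_compl_singleton

variable (v : E) {f g : E → ℝ}

lemma iter_congr (hfg : ∀ x : E, x ≠ 0 → f x = g x) (n : ℕ) :
    ∀ x : E, x ≠ 0 → (dirDeriv v)^[n] f x = (dirDeriv v)^[n] g x := by
  induction n with
  | zero => exact hfg
  | succ n ih =>
    intro x hx
    rw [Function.iterate_succ_apply', Function.iterate_succ_apply']
    show fderiv ℝ ((dirDeriv v)^[n] f) x v = fderiv ℝ ((dirDeriv v)^[n] g) x v
    have hev : (dirDeriv v)^[n] f =ᶠ[nhds x] (dirDeriv v)^[n] g := by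
      filter_upwards [isOpen_U.mem_nhds hx] with y hy using ih y hy
    rw [hev.fderiv_eq]

variable (hf : ContDiffOn ℝ ⊤ f {x : E | x ≠ 0})

include hf

lemma diffAt_iter (n : ℕ) {x : E} (hx : x ≠ 0) :
    DifferentiableAt ℝ (iteratedFDeriv ℝ n f) x := by
  have h1 : DifferentiableOn ℝ (iteratedFDerivWithin ℝ n f {x : E | x ≠ 0}) {x : E | x ≠ 0} :=
    hf.differentiableOn_iteratedFDerivWithin (by simp)
      isOpen_U.uniqueDiffOn
  have h2 : DifferentiableOn ℝ (iteratedFDeriv ℝ n f) {x : E | x ≠ 0} :=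
    h1.congr fun y hy => (iteratedFDerivWithin_of_isOpen n isOpen_U hy).symm
  exact (h2 x hx).differentiableAt (isOpen_U.mem_nhds hx)

lemma hasFDerivAt_Psi (n : ℕ) {x : E} (hx : x ≠ 0) :
    HasFDerivAt (fun y => iteratedFDeriv ℝ n f y (fun _ => v))
      ((ContinuousMultilinearMap.apply ℝ (fun _ : Fin n => E) ℝ (fun _ => v)).comp
        (fderiv ℝ (iteratedFDeriv ℝ n f) x)) x :=
  (ContinuousMultilinearMap.apply ℝ (fun _ : Fin n => E) ℝ
    (fun _ => v)).hasFDerivAt.comp x (diffAt_iter hf n hx).hasFDerivAt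

lemma dirDeriv_iterate_eq (n : ℕ) :
    ∀ x : E, x ≠ 0 → (dirDeriv v)^[n] f x = iteratedFDeriv ℝ n f x (fun _ => v) := by
  induction n with
  | zero =>
    intro x hx
    simp [iteratedFDeriv_zero_apply]
  | succ n ih =>
    intro x hx
    rw [Function.iterate_succ_apply']
    show fderiv ℝ ((dirDeriv v)^[n] f) x v = _
    have hev : (dirDeriv v)^[n] f =ᶠ[nhds x]
        (fun y => iteratedFDeriv ℝ n f y (fun _ => v)) := by
      filter_upwards [isOpen_U.mem_nhds hx] with y hy using ih y hy
    rw [hev.fderiv_eq, (hasFDerivAt_Psi v hf n hx).fderiv]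
    rw [iteratedFDeriv_succ_apply_left]
    rfl

lemma line_deriv_eq (η : E) (n : ℕ) :
    ∀ t : ℝ, η + t • v ≠ 0 →
      iteratedDeriv n (fun τ => f (η + τ • v)) t
        = iteratedFDeriv ℝ n f (η + t • v) (fun _ => v) := by
  induction n with
  | zero =>
    intro t ht
    simp [iteratedFDeriv_zero_apply]
  | succ n ih =>
    intro t ht
    rw [iteratedDeriv_succ]
    have hopen : IsOpen {τ : ℝ | η + τ • v ≠ 0} := by
      have hc : Continuous (fun τ : ℝ => η + τ • v) := by continuity
      exact isOpen_U.preimage hc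
    have hev : iteratedDeriv n (fun τ => f (η + τ • v)) =ᶠ[nhds t]
        (fun τ => iteratedFDeriv ℝ n f (η + τ • v) (fun _ => v)) := by
      filter_upwards [hopen.mem_nhds ht] with τ hτ using ih τ hτ
    rw [hev.deriv_eq]
    have hline : HasDerivAt (fun τ : ℝ => η + τ • v) v t := by
      simpa using ((hasDerivAt_id t).smul_const v).const_add η
    have hcomp := (hasFDerivAt_Psi v hf n ht).comp_hasDerivAt t hline
    simp only [Function.comp_def] at hcomp
    rw [hcomp.deriv]
    rw [iteratedFDeriv_succ_apply_left]
    rfl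

end LW3

namespace LW4

open LW LW2 LW3

abbrev E := EuclideanSpace ℝ (Fin 3)

variable (η v : E)

lemma g_contDiffOn (c : ℝ) :
    ContDiffOn ℝ ⊤ (fun x : E => ((‖x‖ ^ 2 : ℝ)) ^ c) {x : E | x ≠ 0} := by
  intro x hx
  have h1 : ContDiffAt ℝ ⊤ (fun x : E => (‖x‖ ^ 2 : ℝ)) x := (contDiff_norm_sq ℝ).contDiffAt
  have h2 := h1.rpow_const_of_ne (p := c)
    (pow_ne_zero 2 (norm_ne_zero_iff.mpr hx))
  exact h2.contDiffWithinAt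

lemma line_eq (m : ℕ) :
    (fun τ : ℝ => ((‖η + τ • v‖ ^ 2 : ℝ)) ^ ((2 * (m : ℝ) - 1) / 2))
      = fun τ : ℝ => LW2.Q (‖v‖ ^ 2) ⟪v, η⟫ (‖η‖ ^ 2) τ ^ ((2 * (m : ℝ) - 1) / 2) := by
  funext τ
  congr 1
  rw [norm_add_sq_real, LW2.Q, real_inner_smul_right, norm_smul, mul_pow, real_inner_comm]
  simp [sq_abs]
  ring

lemma fg_eq (m : ℕ) : ∀ x : E, x ≠ 0 →
    ‖x‖ ^ (2 * (m : ℤ) - 1) = ((‖x‖ ^ 2 : ℝ)) ^ ((2 * (m : ℝ) - 1) / 2) := by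
  intro x hx
  have hn : (0 : ℝ) < ‖x‖ := norm_pos_iff.mpr hx
  rw [← Real.rpow_intCast ‖x‖ (2 * (m : ℤ) - 1), ← Real.rpow_natCast ‖x‖ 2,
    ← Real.rpow_mul (norm_nonneg x)]
  congr 1
  push_cast
  ring

lemma term_eval (hη : η ≠ 0) (m : ℕ) :
    (dirDeriv v)^[2 * m] (fun x => ‖x‖ ^ (2 * (m : ℤ) - 1)) η
      = LW2.K m * LW2.W (‖v‖ ^ 2) ⟪v, η⟫ (‖η‖ ^ 2) ^ m *
          ((‖η‖ ^ 2 : ℝ)) ^ (-(2 * (m : ℝ) + 1) / 2) := by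
  set c : ℝ := (2 * (m : ℝ) - 1) / 2 with hc
  have hg := g_contDiffOn c
  rw [LW3.iter_congr v (fg_eq m) (2 * m) η hη]
  rw [LW3.dirDeriv_iterate_eq v hg (2 * m) η hη]
  have h0 : η + (0 : ℝ) • v ≠ 0 := by simpa using hη
  have hT := LW3.line_deriv_eq v hg η (2 * m) 0 h0
  simp only [zero_smul, add_zero] at hT
  rw [← hT, line_eq η v m]
  have hQeq : LW2.Q (‖v‖ ^ 2) ⟪v, η⟫ (‖η‖ ^ 2) 0 = ‖η‖ ^ 2 := by
    rw [LW2.Q]; ring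
  have hQ0 : 0 < LW2.Q (‖v‖ ^ 2) ⟪v, η⟫ (‖η‖ ^ 2) 0 := by
    rw [hQeq]
    exact pow_pos (norm_pos_iff.mpr hη) 2
  have hres := LW2.oneD (‖v‖ ^ 2) ⟪v, η⟫ (‖η‖ ^ 2) m 0 hQ0
  rw [hQeq] at hres
  exact hres

lemma K_eq_fact_a (m : ℕ) : LW2.K m = ((2 * m).factorial : ℝ) * LW.a m := by
  induction m with
  | zero => simp [LW2.K, LW.a_zero]
  | succ m ih =>
    have hrec := LW.a_rec m
    have hfact : (((2 * (m + 1)).factorial : ℕ) : ℝ)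
        = (2 * (m : ℝ) + 2) * (2 * (m : ℝ) + 1) * ((2 * m).factorial : ℝ) := by
      rw [show 2 * (m + 1) = (2 * m + 1) + 1 from by ring, Nat.factorial_succ,
        Nat.factorial_succ]
      push_cast
      ring
    rw [LW2.K_succ, ih, hfact]
    nlinarith [hrec, Nat.factorial_pos (2 * m), sq_nonneg (LW.a m)]

end LW4


theorem hasSum_lienard_wiechert_resummation (η v : EuclideanSpace ℝ (Fin 3))
    (hη : η ≠ 0) (hv : ‖v‖ < 1) :
    HasSum
      (fun m : ℕ =>
        (1 / (Nat.factorial (2 * m) : ℝ)) *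
          ((dirDeriv v)^[2 * m] (fun x => ‖x‖ ^ (2 * (m : ℤ) - 1))) η)
      (1 / (‖η‖ * Real.sqrt (1 - ‖v‖ ^ 2 + ⟪v, ‖η‖⁻¹ • η⟫ ^ 2))) := by
  have hn : (0 : ℝ) < ‖η‖ := norm_pos_iff.mpr hη
  set u : ℝ := ‖v‖ ^ 2 with hu
  set s : ℝ := ⟪v, η⟫ with hs
  set r2 : ℝ := ‖η‖ ^ 2 with hr2
  have hr2pos : (0 : ℝ) < r2 := by rw [hr2]; positivity
  set w : ℝ := (u * r2 - s ^ 2) / r2 with hw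
  have hCS : s ^ 2 ≤ u * r2 := by
    have h := real_inner_mul_inner_self_le v η
    rw [hu, hs, hr2]
    rw [real_inner_self_eq_norm_sq, real_inner_self_eq_norm_sq] at h
    nlinarith [h]
  have hw0 : 0 ≤ w := div_nonneg (by linarith) hr2pos.le
  have hw1 : w < 1 := by
    rw [hw, div_lt_one hr2pos]
    have hs2 : 0 ≤ s ^ 2 := sq_nonneg s
    have : u < 1 := by rw [hu]; nlinarith [norm_nonneg v]
    nlinarith
  -- the inner product with the unit vector
  have hinner : ⟪v, ‖η‖⁻¹ • η⟫ = ‖η‖⁻¹ * s := by rw [hs, real_inner_smul_right]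
  have hsqrt_arg : 1 - ‖v‖ ^ 2 + ⟪v, ‖η‖⁻¹ • η⟫ ^ 2 = 1 - w := by
    rw [hinner, hw]
    field_simp
    rw [hr2, hu]
    ring
  have hsum0 := (LW.hasSum_central (by linarith : (-1 : ℝ) < w) hw1).mul_right ‖η‖⁻¹
  have hterm : ∀ m : ℕ,
      (1 / (Nat.factorial (2 * m) : ℝ)) *
          ((dirDeriv v)^[2 * m] (fun x => ‖x‖ ^ (2 * (m : ℤ) - 1))) η
        = LW.a m * w ^ m * ‖η‖⁻¹ := by
    intro m
    rw [LW4.term_eval η v hη m, ← hu, ← hs, ← hr2, LW4.K_eq_fact_a]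
    have hW : LW2.W u s r2 = w * r2 := by
      rw [LW2.W, hw]
      field_simp
    have hfact : ((2 * m).factorial : ℝ) ≠ 0 := by
      exact_mod_cast (Nat.factorial_pos (2 * m)).ne'
    have hpow : LW2.W u s r2 ^ m * (r2 : ℝ) ^ (-(2 * (m : ℝ) + 1) / 2)
        = w ^ m * ‖η‖⁻¹ := by
      rw [hW, mul_pow]
      have h1 : (r2 : ℝ) ^ m * (r2 : ℝ) ^ (-(2 * (m : ℝ) + 1) / 2)
          = r2 ^ (-(1 : ℝ) / 2) := by
        rw [← Real.rpow_natCast r2 m, ← Real.rpow_add hr2pos]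
        congr 1
        push_cast
        ring
      have h2 : (r2 : ℝ) ^ (-(1 : ℝ) / 2) = ‖η‖⁻¹ := by
        rw [hr2, ← Real.rpow_natCast ‖η‖ 2, ← Real.rpow_mul (norm_nonneg η)]
        rw [show ((2 : ℕ) : ℝ) * (-(1 : ℝ) / 2) = -1 from by norm_num, Real.rpow_neg_one]
      rw [mul_assoc, h1, h2]
    rw [mul_assoc, mul_assoc, one_div, inv_mul_cancel_left₀ hfact, hpow]
    ring
  have hval : 1 / (‖η‖ * Real.sqrt (1 - ‖v‖ ^ 2 + ⟪v, ‖η‖⁻¹ • η⟫ ^ 2))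
      = (Real.sqrt (1 - w))⁻¹ * ‖η‖⁻¹ := by
    rw [hsqrt_arg, one_div, mul_inv_rev]
  rw [funext hterm, hval]
  exact hsum0
end
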